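/- arXiv:1801.01925 — 7 statements merged into one kernel-verified Lean document; each statement's English description precedes it below -/
import Mathlib

section
/- Let λ = ζ(3/2)/(2ζ(3)). For all real numbers x > y > 8, the number of primitive nondeficient numbers n ≤ x whose square-full part satisfies s(n) ≥ y is at most λ·x·y^(−1/2) + 2·x·y^(−2/3). -/
open ArithmeticFunction
open scoped ArithmeticFunction.sigma
open Finset

/-- A positive integer `n` is nondeficient if `σ n ≥ 2n`; it is a primitive
nondeficient number (pnd) if moreover every proper divisor is deficient. -/
def Pnd (n : ℕ) : Prop :=
  0 < n ∧ 2 * n ≤ σ 1 n ∧ ∀ d : ℕ, d ∣ n → d < n → σ 1 d < 2 * d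

/-- The square-full part `s(n)` of `n`: the product of the prime powers
`p ^ (v_p(n))` over primes `p` with `v_p(n) ≥ 2`.  Then `n = q * sqfullPart n`
with `q` squarefree, `sqfullPart n` square-full and `gcd(q, sqfullPart n) = 1`. -/
def sqfullPart (n : ℕ) : ℕ :=
  ∏ p ∈ n.primeFactors.filter (fun p => 2 ≤ n.factorization p), p ^ n.factorization p

lemma pnd_dvd_eq {a b : ℕ} (ha : Pnd a) (hb : Pnd b) (hd : a ∣ b) : a = b := by
  by_contra hne
  have hlt : a < b := lt_of_le_of_ne (Nat.le_of_dvd hb.1 hd) hne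
  exact absurd (hb.2.2 a hd hlt) (not_lt.mpr ha.2.1)

lemma squarefree_prod_primes {F : Finset ℕ} (h : ∀ p ∈ F, p.Prime) :
    Squarefree (∏ p ∈ F, p) := by
  classical
  induction F using Finset.induction_on with
  | empty => simpa using squarefree_one
  | @insert p F hp ih =>
    rw [Finset.prod_insert hp]
    have hpp : p.Prime := h p (Finset.mem_insert_self _ _)
    have hF : ∀ q ∈ F, q.Prime := fun q hq => h q (Finset.mem_insert_of_mem hq)
    have hcop : Nat.Coprime p (∏ q ∈ F, q) := by
      apply Nat.Coprime.prod_right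
      intro q hq
      exact (Nat.coprime_primes hpp (hF q hq)).mpr (by rintro rfl; exact hp hq)
    exact (Nat.squarefree_mul hcop).mpr ⟨hpp.squarefree, ih hF⟩

lemma prod_primeFactors_pow_eq_self {n : ℕ} (hn : n ≠ 0) :
    ∏ p ∈ n.primeFactors, p ^ n.factorization p = n := by
  conv_rhs => rw [← Nat.factorization_prod_pow_eq_self hn]
  rw [Finsupp.prod]
  rw [Nat.support_factorization]

lemma sqfullPart_decomp (n : ℕ) (hn : n ≠ 0) :
    Squarefree (n / sqfullPart n) ∧ (n / sqfullPart n) * sqfullPart n = n ∧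
      sqfullPart n ≠ 0 := by
  classical
  set G := n.primeFactors.filter (fun p => ¬ 2 ≤ n.factorization p) with hG
  have hmul : sqfullPart n * (∏ p ∈ G, p ^ n.factorization p) = n := by
    rw [sqfullPart, hG, Finset.prod_filter_mul_prod_filter_not]
    exact prod_primeFactors_pow_eq_self hn
  have hGq : ∏ p ∈ G, p ^ n.factorization p = ∏ p ∈ G, p := by
    apply Finset.prod_congr rfl
    intro p hp
    rw [hG, Finset.mem_filter] at hp
    have h1 : 1 ≤ n.factorization p := by
      have := Nat.Prime.factorization_pos_of_dvd (Nat.prime_of_mem_primeFactors hp.1) hn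
        (Nat.dvd_of_mem_primeFactors hp.1)
      omega
    have : n.factorization p = 1 := by omega
    rw [this, pow_one]
  have hsq : Squarefree (∏ p ∈ G, p ^ n.factorization p) := by
    rw [hGq]
    exact squarefree_prod_primes fun p hp =>
      Nat.prime_of_mem_primeFactors (Finset.mem_filter.mp hp).1
  have hs0 : sqfullPart n ≠ 0 := by
    intro h0
    rw [h0, zero_mul] at hmul
    exact hn hmul.symm
  have hq : n / sqfullPart n = ∏ p ∈ G, p ^ n.factorization p := by
    exact Nat.div_eq_of_eq_mul_left (Nat.pos_of_ne_zero hs0)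
      (((mul_comm _ _).trans hmul).symm)
  refine ⟨by rw [hq]; exact hsq, ?_, hs0⟩
  rw [hq, mul_comm]
  exact hmul

lemma sqfullPart_cube_sq (n : ℕ) :
    ∃ a b : ℕ, 0 < a ∧ 0 < b ∧ Squarefree b ∧ b ^ 3 * a ^ 2 = sqfullPart n := by
  classical
  rcases eq_or_ne n 0 with rfl | hn
  · exact ⟨1, 1, one_pos, one_pos, squarefree_one, by simp [sqfullPart]⟩
  set v := n.factorization with hv
  set F := n.primeFactors.filter (fun p => 2 ≤ v p) with hFdef
  have hFprime : ∀ p ∈ F, p.Prime := fun p hp =>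
    Nat.prime_of_mem_primeFactors (Finset.mem_filter.mp hp).1
  refine ⟨∏ p ∈ F, p ^ ((v p - if Odd (v p) then 3 else 0) / 2),
    ∏ p ∈ F.filter (fun p => Odd (v p)), p, ?_, ?_, ?_, ?_⟩
  · exact Finset.prod_pos fun p hp => pow_pos (hFprime p hp).pos _
  · exact Finset.prod_pos fun p hp =>
      (hFprime p (Finset.mem_filter.mp hp).1).pos
  · exact squarefree_prod_primes fun p hp => hFprime p (Finset.mem_filter.mp hp).1
  · rw [← Finset.prod_pow, Finset.prod_filter, ← Finset.prod_pow, ← Finset.prod_mul_distrib]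
    apply Finset.prod_congr rfl
    intro p hp
    have hv2 : 2 ≤ v p := (Finset.mem_filter.mp hp).2
    have hcast : (if Odd (v p) then p ^ 3 else 1) = p ^ (if Odd (v p) then 3 else 0) := by
      by_cases ho : Odd (v p) <;> simp [ho]
    rw [hcast, ← pow_mul, ← pow_add]
    congr 1
    have hvp : n.factorization p = v p := rfl
    rw [hvp]
    by_cases ho : Odd (v p)
    · rw [if_pos ho]
      obtain ⟨k, hk⟩ := ho
      omega
    · rw [if_neg ho]
      have he : Even (v p) := Nat.not_odd_iff_even.mp ho
      obtain ⟨k, hk⟩ := he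
      omega

lemma sqfree_mul_sq_inj {b₁ b₂ n₁ n₂ : ℕ} (h₁ : Squarefree b₁) (h₂ : Squarefree b₂)
    (hn₁ : n₁ ≠ 0) (hn₂ : n₂ ≠ 0) (h : b₁ * n₁ ^ 2 = b₂ * n₂ ^ 2) :
    b₁ = b₂ ∧ n₁ = n₂ := by
  have hb₁ : b₁ ≠ 0 := h₁.ne_zero
  have hb₂ : b₂ ≠ 0 := h₂.ne_zero
  have key : ∀ p, b₁.factorization p = b₂.factorization p ∧
      n₁.factorization p = n₂.factorization p := by
    intro p
    have hfac := congrArg (fun m => m.factorization p) h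
    simp only [Nat.factorization_mul hb₁ (pow_ne_zero 2 hn₁),
      Nat.factorization_mul hb₂ (pow_ne_zero 2 hn₂), Nat.factorization_pow,
      Finsupp.add_apply, Finsupp.smul_apply, smul_eq_mul] at hfac
    have l1 := h₁.natFactorization_le_one p
    have l2 := h₂.natFactorization_le_one p
    omega
  constructor
  · exact Nat.factorization_inj hb₁ hb₂ (Finsupp.ext fun p => (key p).1)
  · exact Nat.factorization_inj hn₁ hn₂ (Finsupp.ext fun p => (key p).2)

lemma sum_Icc_inv_sq_le {m M : ℕ} (hm : 1 ≤ m) (hmM : m ≤ M) :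
    ∑ a ∈ Icc (m + 1) M, (1 : ℝ) / (a : ℝ) ^ 2 ≤ 1 / (m : ℝ) - 1 / (M : ℝ) := by
  induction M, hmM using Nat.le_induction with
  | base => simp [Finset.Icc_eq_empty_of_lt (Nat.lt_succ_self m)]
  | succ M hmM ih =>
    rw [Finset.sum_Icc_succ_top (by omega : m + 1 ≤ M + 1)]
    have hM : (0:ℝ) < (M:ℝ) := by
      have : 1 ≤ M := le_trans hm hmM
      exact_mod_cast this
    have hM1 : (0:ℝ) < (M:ℝ) + 1 := by positivity
    have key : (1:ℝ) / ((M:ℝ) + 1) ^ 2 ≤ 1 / (M:ℝ) - 1 / ((M:ℝ) + 1) := by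
      rw [div_sub_div _ _ (ne_of_gt hM) (ne_of_gt hM1), div_le_div_iff₀ (by positivity) (by positivity)]
      ring_nf
      nlinarith
    push_cast
    linarith [ih]

lemma sum_Icc_one_inv_sq {M : ℕ} (hM : 1 ≤ M) :
    ∑ a ∈ Icc 1 M, (1 : ℝ) / (a : ℝ) ^ 2 ≤ 2 - 1 / (M : ℝ) := by
  have hins : Icc 1 M = insert 1 (Icc 2 M) := by
    ext a; simp only [mem_Icc, mem_insert]; omega
  rw [hins, Finset.sum_insert (by simp)]
  have := sum_Icc_inv_sq_le (le_refl 1) hM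
  norm_num at this ⊢
  linarith

lemma sum_Icc_inv_cube_le {m M : ℕ} (hm : 1 ≤ m) (hmM : m ≤ M) :
    ∑ a ∈ Icc (m + 1) M, (1 : ℝ) / (a : ℝ) ^ 3 ≤ 1 / (2 * (m : ℝ) ^ 2) - 1 / (2 * (M : ℝ) ^ 2) := by
  induction M, hmM using Nat.le_induction with
  | base => simp [Finset.Icc_eq_empty_of_lt (Nat.lt_succ_self m)]
  | succ M hmM ih =>
    rw [Finset.sum_Icc_succ_top (by omega : m + 1 ≤ M + 1)]
    have hM : (0:ℝ) < (M:ℝ) := by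
      have : 1 ≤ M := le_trans hm hmM
      exact_mod_cast this
    have hM1 : (0:ℝ) < (M:ℝ) + 1 := by positivity
    have key : (1:ℝ) / ((M:ℝ) + 1) ^ 3 ≤ 1 / (2*(M:ℝ)^2) - 1 / (2*((M:ℝ)+1)^2) := by
      rw [div_sub_div _ _ (by positivity) (by positivity), div_le_div_iff₀ (by positivity) (by positivity)]
      ring_nf
      nlinarith
    push_cast
    linarith [ih]

lemma ceil_lb {t : ℝ} (ht : 1 < t) : t ^ 2 / (t + 2) ≤ (⌈t⌉₊ : ℝ) - 1 := by
  have h2 : (2 : ℝ) ≤ (⌈t⌉₊ : ℝ) := by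
    have : 1 < ⌈t⌉₊ := by
      rw [Nat.lt_ceil]; exact_mod_cast ht
    exact_mod_cast this
  have ht0 : (0:ℝ) < t + 2 := by linarith
  rcases le_or_gt t 2 with h | h
  · calc t ^ 2 / (t + 2) ≤ 1 := by
          rw [div_le_one ht0]; nlinarith
      _ ≤ (⌈t⌉₊ : ℝ) - 1 := by linarith
  · have hle : t ≤ (⌈t⌉₊ : ℝ) := Nat.le_ceil t
    calc t ^ 2 / (t + 2) ≤ t - 1 := by
          rw [div_le_iff₀ ht0]; nlinarith
      _ ≤ (⌈t⌉₊ : ℝ) - 1 := by linarith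

lemma sqrt_cube {r : ℝ} (hr : 0 ≤ r) : Real.sqrt (r ^ 3) = r ^ ((3:ℝ)/2) := by
  rw [Real.sqrt_eq_rpow, ← Real.rpow_natCast r 3, ← Real.rpow_mul hr]
  norm_num

noncomputable def Aval : ℝ := ∑' n : ℕ, 1 / Real.sqrt (((n : ℝ) + 1) ^ 3)
noncomputable def Bval : ℝ := ∑' n : ℕ, 1 / ((n : ℝ) + 1) ^ 3
noncomputable def Sval : ℝ :=
  ∑' b : ℕ, (if Squarefree b then 1 / Real.sqrt ((b : ℝ) ^ 3) else 0)

lemma summable_A : Summable (fun n : ℕ => 1 / Real.sqrt (((n : ℝ) + 1) ^ 3)) := by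
  have h0 : Summable (fun n : ℕ => 1 / (n : ℝ) ^ ((3:ℝ)/2)) :=
    Real.summable_one_div_nat_rpow.mpr (by norm_num)
  have h1 : Summable (fun n : ℕ => 1 / ((n : ℝ) + 1) ^ ((3:ℝ)/2)) := by
    have := (summable_nat_add_iff 1).mpr h0
    simpa using this
  refine h1.congr fun n => ?_
  rw [sqrt_cube (by positivity)]

lemma summable_B : Summable (fun n : ℕ => 1 / ((n : ℝ) + 1) ^ 3) := by
  have h0 : Summable (fun n : ℕ => 1 / (n : ℝ) ^ (3:ℕ)) :=
    Real.summable_one_div_nat_pow.mpr (by norm_num)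
  have := (summable_nat_add_iff 1).mpr h0
  simpa using this

lemma summable_g : Summable (fun b : ℕ => 1 / Real.sqrt ((b : ℝ) ^ 3)) := by
  have h0 : Summable (fun n : ℕ => 1 / (n : ℝ) ^ ((3:ℝ)/2)) :=
    Real.summable_one_div_nat_rpow.mpr (by norm_num)
  refine h0.congr fun n => ?_
  rw [sqrt_cube (by positivity)]

lemma summable_Sind :
    Summable (fun b : ℕ => (if Squarefree b then 1 / Real.sqrt ((b : ℝ) ^ 3) else 0)) := by
  refine Summable.of_nonneg_of_le (fun b => ?_) (fun b => ?_) summable_g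
  · split_ifs <;> positivity
  · split_ifs
    · exact le_refl _
    · positivity

lemma B_pos : 0 < Bval := by
  refine summable_B.tsum_pos (fun n => by positivity) 0 ?_
  norm_num

lemma Sval_mul_B_le : Sval * Bval ≤ Aval := by
  classical
  set g : ℕ → ℝ := fun b => 1 / Real.sqrt ((b : ℝ) ^ 3) with hg
  set h : ℕ → ℝ := fun m => 1 / ((m : ℝ) + 1) ^ 3 with hh
  have hS : Sval = ∑' b : {b : ℕ // Squarefree b}, g ↑b := by
    have h1 : ∑' (b : {b : ℕ // Squarefree b}), g ↑b
        = ∑' b : ℕ, Set.indicator {b : ℕ | Squarefree b} g b :=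
      _root_.tsum_subtype {b : ℕ | Squarefree b} g
    rw [h1]
    apply tsum_congr
    intro b
    by_cases hb : Squarefree b
    · simp [Sval, Set.indicator_apply, hb, hg]
    · simp [Sval, Set.indicator_apply, hb, hg]
  have hgσ : Summable (fun b : {b : ℕ // Squarefree b} => g ↑b) :=
    summable_g.subtype _
  have hprod : Summable (fun p : {b : ℕ // Squarefree b} × ℕ => g ↑p.1 * h p.2) :=
    Summable.mul_of_nonneg hgσ summable_B (fun b => by positivity) (fun m => by positivity)
  have hmul : Sval * Bval = ∑' p : {b : ℕ // Squarefree b} × ℕ, g ↑p.1 * h p.2 := by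
    rw [hS, Bval]
    exact Summable.tsum_mul_tsum hgσ summable_B hprod
  rw [hmul, Aval]
  set e : {b : ℕ // Squarefree b} × ℕ → ℕ := fun p => p.1.1 * (p.2 + 1) ^ 2 - 1 with he
  have hepos : ∀ p : {b : ℕ // Squarefree b} × ℕ, e p + 1 = p.1.1 * (p.2 + 1) ^ 2 := by
    intro p
    have hb1 : 1 ≤ p.1.1 := Nat.pos_of_ne_zero p.1.2.ne_zero
    have h1 : 1 ≤ p.1.1 * (p.2 + 1) ^ 2 := Nat.one_le_iff_ne_zero.mpr (by positivity)
    simp only [he]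
    omega
  have einj : Function.Injective e := by
    intro p q hpq
    have hp := hepos p
    have hq := hepos q
    have heq : p.1.1 * (p.2 + 1) ^ 2 = q.1.1 * (q.2 + 1) ^ 2 := by omega
    obtain ⟨hb, hn⟩ := sqfree_mul_sq_inj p.1.2 q.1.2 (by omega) (by omega) heq
    have : p.2 = q.2 := by omega
    exact Prod.ext (Subtype.ext hb) this
  refine hprod.tsum_le_tsum_of_inj e einj (fun c _ => by positivity) (fun p => ?_) summable_A
  have hcast : ((e p : ℝ) + 1) = (p.1.1 : ℝ) * ((p.2 : ℝ) + 1) ^ 2 := by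
    have hc := congrArg (Nat.cast : ℕ → ℝ) (hepos p)
    push_cast at hc
    linarith
  rw [hcast]
  have hb0 : (0:ℝ) ≤ (p.1.1 : ℝ) := by positivity
  have hm0 : (0:ℝ) ≤ (p.2 : ℝ) + 1 := by positivity
  have hexp : ((p.1.1 : ℝ) * ((p.2 : ℝ) + 1) ^ 2) ^ 3
      = (p.1.1 : ℝ) ^ 3 * (((p.2 : ℝ) + 1) ^ 3) ^ 2 := by ring
  rw [hexp, Real.sqrt_mul (by positivity), Real.sqrt_sq (by positivity)]
  rw [hg, hh]
  simp only []
  rw [div_mul_div_comm, one_mul]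

lemma zeta3_eq : riemannZeta 3 = (Bval : ℂ) := by
  rw [zeta_eq_tsum_one_div_nat_add_one_cpow (by norm_num : 1 < (3:ℂ).re)]
  rw [Bval, Complex.ofReal_tsum]
  apply tsum_congr
  intro n
  rw [show (3:ℂ) = ((3:ℕ):ℂ) by norm_num, Complex.cpow_natCast]
  push_cast
  ring

lemma zeta32_eq : riemannZeta (3/2) = (Aval : ℂ) := by
  have h32 : ((3:ℂ)/2) = (((3:ℝ)/2 : ℝ) : ℂ) := by norm_num
  rw [h32, zeta_eq_tsum_one_div_nat_add_one_cpow
    (by rw [Complex.ofReal_re]; norm_num)]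
  rw [Aval, Complex.ofReal_tsum]
  apply tsum_congr
  intro n
  have hnn : (0:ℝ) ≤ (n:ℝ) + 1 := by positivity
  rw [sqrt_cube hnn]
  rw [show ((n:ℂ)+1) = (((n:ℝ)+1 : ℝ) : ℂ) by push_cast; ring]
  rw [← Complex.ofReal_cpow hnn]
  push_cast
  ring

lemma sum_f_eq {x sb : ℝ} (m M : ℕ) (hm : 1 ≤ m) :
    ∑ a ∈ Icc m M, ((x / (sb * (a:ℝ)^2) + 1)/2)
      = (x/sb/2) * (∑ a ∈ Icc m M, (1:ℝ)/(a:ℝ)^2) + ((Icc m M).card : ℝ) * (1/2) := by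
  have hconst : ((Icc m M).card : ℝ) * (1/2) = ∑ _a ∈ Icc m M, (1/2:ℝ) := by
    rw [Finset.sum_const, nsmul_eq_mul]
  rw [hconst, Finset.mul_sum, ← Finset.sum_add_distrib]
  · apply Finset.sum_congr rfl
    intro a ha
    have ha1 : 1 ≤ a := le_trans hm (Finset.mem_Icc.mp ha).1
    have ha0 : ((a:ℝ)) ≠ 0 := by positivity
    rcases eq_or_ne sb 0 with rfl | hsb
    · simp
    · field_simp
  
lemma inner_case1 {x : ℝ} (hx : 0 ≤ x) (X b : ℕ) (hb : 0 < b) :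
    ∑ a ∈ Icc 1 X,
        (if ((b:ℝ)^3 * (a:ℝ)^2 ≤ x) then (x / ((b:ℝ)^3 * (a:ℝ)^2) + 1)/2 else 0)
      ≤ x / (b:ℝ)^3 := by
  have hb0 : (0:ℝ) < (b:ℝ) := by exact_mod_cast hb
  set sb := (b:ℝ)^3 with hsb
  have hsb0 : 0 < sb := by positivity
  set M := ⌊Real.sqrt (x / sb)⌋₊ with hM
  rw [← Finset.sum_filter]
  have hsubset : (Icc 1 X).filter (fun a : ℕ => sb * (a:ℝ)^2 ≤ x) ⊆ Icc 1 M := by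
    intro a ha
    rw [Finset.mem_filter, Finset.mem_Icc] at ha
    obtain ⟨⟨h1, _⟩, h3⟩ := ha
    rw [Finset.mem_Icc]
    refine ⟨h1, Nat.le_floor ?_⟩
    have ha2 : (a:ℝ)^2 ≤ x / sb := by
      rw [le_div_iff₀ hsb0]; linarith [mul_comm sb ((a:ℝ)^2)]
    calc (a:ℝ) = Real.sqrt ((a:ℝ)^2) := (Real.sqrt_sq (by positivity)).symm
      _ ≤ Real.sqrt (x / sb) := Real.sqrt_le_sqrt ha2
  have hstep : ∑ a ∈ (Icc 1 X).filter (fun a : ℕ => sb * (a:ℝ)^2 ≤ x),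
      ((x / (sb * (a:ℝ)^2) + 1)/2) ≤ ∑ a ∈ Icc 1 M, ((x / (sb * (a:ℝ)^2) + 1)/2) := by
    apply Finset.sum_le_sum_of_subset_of_nonneg hsubset
    intro i _ _
    have : (0:ℝ) ≤ (i:ℝ)^2 := by positivity
    positivity
  refine le_trans hstep ?_
  rcases Nat.eq_zero_or_pos M with hM0 | hM1
  · rw [hM0]
    simp
    positivity
  · have hMc : (0:ℝ) < (M:ℝ) := by exact_mod_cast hM1
    rw [sum_f_eq _ _ le_rfl, Nat.card_Icc]
    have hsum := sum_Icc_one_inv_sq hM1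
    have hMle : (M:ℝ)^2 ≤ x / sb := by
      have h1 : (M:ℝ) ≤ Real.sqrt (x / sb) := Nat.floor_le (Real.sqrt_nonneg _)
      have h2 : (0:ℝ) ≤ x / sb := by positivity
      nlinarith [Real.sq_sqrt h2]
    have hkey : (M:ℝ)*(1/2) ≤ (x/sb/2) * (1/(M:ℝ)) := by
      rw [mul_one_div, mul_one_div, div_le_div_iff₀ (by norm_num) hMc]
      nlinarith
    have hcard : ((M + 1 - 1 : ℕ) : ℝ) = (M:ℝ) := by
      push_cast [Nat.add_sub_cancel]
      ring
    rw [hcard]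
    have hmono : (x/sb/2) * (∑ a ∈ Icc 1 M, (1:ℝ)/(a:ℝ)^2) ≤ (x/sb/2) * (2 - 1/(M:ℝ)) :=
      mul_le_mul_of_nonneg_left hsum (by positivity)
    have hexp : (x/sb/2) * (2 - 1/(M:ℝ)) = x/sb - (x/sb/2)*(1/(M:ℝ)) := by ring
    linarith

lemma inner_case2 {x y : ℝ} (hx : 0 ≤ x) (hy0 : 0 < y) (X b : ℕ) (hb : 0 < b)
    (hlt : (b:ℝ)^3 < y) :
    ∑ a ∈ Icc 1 X,
        (if (y ≤ (b:ℝ)^3 * (a:ℝ)^2 ∧ (b:ℝ)^3 * (a:ℝ)^2 ≤ x)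
          then (x / ((b:ℝ)^3 * (a:ℝ)^2) + 1)/2 else 0)
      ≤ (x/2) * (1/(Real.sqrt ((b:ℝ)^3) * Real.sqrt y)) + x/y := by
  have hb0 : (0:ℝ) < (b:ℝ) := by exact_mod_cast hb
  set sb := (b:ℝ)^3 with hsb
  have hsb0 : 0 < sb := by positivity
  have hrhs0 : 0 ≤ (x/2) * (1/(Real.sqrt sb * Real.sqrt y)) + x/y := by positivity
  set t := Real.sqrt (y/sb) with htdef
  have hyd : (1:ℝ) < y / sb := (one_lt_div hsb0).mpr hlt
  have ht2 : t^2 = y/sb := Real.sq_sqrt (by positivity)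
  have ht1 : 1 < t := by
    nlinarith [Real.sqrt_nonneg (y/sb)]
  set m := ⌈t⌉₊ with hmdef
  set M := ⌊Real.sqrt (x / sb)⌋₊ with hMdef
  rw [← Finset.sum_filter]
  have hsubset : (Icc 1 X).filter
      (fun a : ℕ => y ≤ sb * (a:ℝ)^2 ∧ sb * (a:ℝ)^2 ≤ x) ⊆ Icc m M := by
    intro a ha
    rw [Finset.mem_filter, Finset.mem_Icc] at ha
    obtain ⟨⟨h1, _⟩, h2, h3⟩ := ha
    rw [Finset.mem_Icc]
    constructor
    · rw [hmdef, Nat.ceil_le]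
      have ha2 : y / sb ≤ (a:ℝ)^2 := by
        rw [div_le_iff₀ hsb0]; linarith [mul_comm sb ((a:ℝ)^2)]
      calc t ≤ Real.sqrt ((a:ℝ)^2) := Real.sqrt_le_sqrt ha2
        _ = (a:ℝ) := Real.sqrt_sq (by positivity)
    · apply Nat.le_floor
      have ha2 : (a:ℝ)^2 ≤ x / sb := by
        rw [le_div_iff₀ hsb0]; linarith [mul_comm sb ((a:ℝ)^2)]
      calc (a:ℝ) = Real.sqrt ((a:ℝ)^2) := (Real.sqrt_sq (by positivity)).symm
        _ ≤ Real.sqrt (x / sb) := Real.sqrt_le_sqrt ha2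
  have hstep : ∑ a ∈ (Icc 1 X).filter
      (fun a : ℕ => y ≤ sb * (a:ℝ)^2 ∧ sb * (a:ℝ)^2 ≤ x),
      ((x / (sb * (a:ℝ)^2) + 1)/2) ≤ ∑ a ∈ Icc m M, ((x / (sb * (a:ℝ)^2) + 1)/2) := by
    apply Finset.sum_le_sum_of_subset_of_nonneg hsubset
    intro i _ _
    have : (0:ℝ) ≤ (i:ℝ)^2 := by positivity
    positivity
  refine le_trans hstep ?_
  have hm2 : 2 ≤ m := by
    rw [hmdef]
    have : (1:ℕ) < ⌈t⌉₊ := by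
      rw [Nat.lt_ceil]; exact_mod_cast ht1
    omega
  rcases lt_or_ge M m with hMm | hmM
  · rw [Finset.Icc_eq_empty (by omega)]
    simpa using hrhs0
  have hM1 : 1 ≤ M := le_trans (by omega) hmM
  have hMc : (0:ℝ) < (M:ℝ) := by exact_mod_cast hM1
  have hmc : (2:ℝ) ≤ (m:ℝ) := by exact_mod_cast hm2
  have hMle : (M:ℝ)^2 ≤ x / sb := by
    have h1 : (M:ℝ) ≤ Real.sqrt (x / sb) := Nat.floor_le (Real.sqrt_nonneg _)
    have h2 : (0:ℝ) ≤ x / sb := by positivity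
    nlinarith [Real.sq_sqrt h2]
  rw [sum_f_eq _ _ (by omega : 1 ≤ m), Nat.card_Icc]
  have hIcc : Icc m M = Icc ((m-1)+1) M := by
    congr 1
    omega
  have hsum : ∑ a ∈ Icc m M, (1:ℝ)/(a:ℝ)^2 ≤ 1/((m:ℝ)-1) - 1/(M:ℝ) := by
    rw [hIcc]
    have := sum_Icc_inv_sq_le (m := m - 1) (M := M) (by omega) (by omega)
    have hcast : ((m - 1 : ℕ) : ℝ) = (m:ℝ) - 1 := by
      push_cast [Nat.cast_sub (by omega : 1 ≤ m)]
      ring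
    rwa [hcast] at this
  have hcard : ((M + 1 - m : ℕ) : ℝ) = (M:ℝ) + 1 - (m:ℝ) := by
    push_cast [Nat.cast_sub (by omega : m ≤ M + 1)]
    ring
  rw [hcard]
  -- key bounds
  have hm1pos : (0:ℝ) < (m:ℝ) - 1 := by linarith
  have ht0 : (0:ℝ) < t := by linarith
  have hkey1 : 1/((m:ℝ)-1) ≤ (t+2)/t^2 := by
    have hceil := ceil_lb ht1
    rw [div_le_div_iff₀ hm1pos (by positivity)]
    have : t^2 ≤ ((m:ℝ)-1) * (t+2) := by
      rw [div_le_iff₀ (by linarith : (0:ℝ) < t + 2)] at hceil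
      linarith
    linarith
  have hmono : (x/sb/2) * (∑ a ∈ Icc m M, (1:ℝ)/(a:ℝ)^2)
      ≤ (x/sb/2) * (1/((m:ℝ)-1) - 1/(M:ℝ)) :=
    mul_le_mul_of_nonneg_left hsum (by positivity)
  have hkey2 : ((M:ℝ) + 1 - (m:ℝ)) * (1/2) ≤ (x/sb/2) * (1/(M:ℝ)) - 1/2 := by
    have hdiv : (M:ℝ)/2 ≤ (x/sb/2)/(M:ℝ) := by
      rw [div_le_div_iff₀ (by norm_num) hMc]
      nlinarith
    rw [mul_one_div, mul_one_div]
    linarith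
  -- main value computation
  have hs2 : Real.sqrt sb ^ 2 = sb := Real.sq_sqrt (le_of_lt hsb0)
  have hsy : Real.sqrt y ^ 2 = y := Real.sq_sqrt (le_of_lt hy0)
  have hs2pos : 0 < Real.sqrt sb := Real.sqrt_pos.mpr hsb0
  have hsypos : 0 < Real.sqrt y := Real.sqrt_pos.mpr hy0
  have htval : t = Real.sqrt y / Real.sqrt sb := by
    rw [htdef, Real.sqrt_div (le_of_lt hy0)]
  have hval : (x/sb/2) * ((t+2)/t^2) = (x/2) * (1/(Real.sqrt sb * Real.sqrt y)) + x/y := by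
    rw [htval, ← hs2, ← hsy, Real.sqrt_sq hs2pos.le, Real.sqrt_sq hsypos.le]
    field_simp
  have hmul1 : (x/sb/2) * (1/((m:ℝ)-1)) ≤ (x/sb/2) * ((t+2)/t^2) :=
    mul_le_mul_of_nonneg_left hkey1 (by positivity)
  have hexpand : (x/sb/2) * (1/((m:ℝ)-1) - 1/(M:ℝ))
      = (x/sb/2) * (1/((m:ℝ)-1)) - (x/sb/2) * (1/(M:ℝ)) := by ring
  rw [← hval]
  linarith

lemma tail_cubes (X : ℕ) {y : ℝ} (hy0 : 0 < y) :
    ∑ b ∈ (Icc 1 X).filter (fun b : ℕ => y ≤ (b:ℝ)^3), 1/(b:ℝ)^3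
      ≤ 1/y + 1/(2 * (y^((1:ℝ)/3))^2) := by
  classical
  set u := y^((1:ℝ)/3) with hu
  have hu0 : 0 < u := Real.rpow_pos_of_pos hy0 _
  have hu3 : u^3 = y := by
    rw [hu, ← Real.rpow_natCast (y ^ ((1:ℝ)/3)) 3, ← Real.rpow_mul hy0.le]
    norm_num
  set F := (Icc 1 X).filter (fun b : ℕ => y ≤ (b:ℝ)^3) with hF
  rcases F.eq_empty_or_nonempty with hFe | hFne
  · rw [hFe]
    simp only [Finset.sum_empty]
    positivity
  set b₀ := F.min' hFne with hb₀
  have hb₀F : b₀ ∈ F := F.min'_mem hFne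
  have hb₀mem := Finset.mem_filter.mp hb₀F
  have hb₀Icc := Finset.mem_Icc.mp hb₀mem.1
  have hb₀y : y ≤ (b₀:ℝ)^3 := hb₀mem.2
  have hb₀1 : 1 ≤ b₀ := hb₀Icc.1
  have hb₀X : b₀ ≤ X := hb₀Icc.2
  have hb₀c : (0:ℝ) < (b₀:ℝ) := by exact_mod_cast hb₀1
  rw [← Finset.add_sum_erase F _ hb₀F]
  have hbound1 : 1/(b₀:ℝ)^3 ≤ 1/y := by
    apply one_div_le_one_div_of_le hy0 hb₀y
  have hsubset : F.erase b₀ ⊆ Icc (b₀ + 1) X := by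
    intro b hb
    have hbF : b ∈ F := Finset.mem_of_mem_erase hb
    have hbne : b ≠ b₀ := Finset.ne_of_mem_erase hb
    have hble : b₀ ≤ b := F.min'_le b hbF
    have hbX : b ≤ X := (Finset.mem_Icc.mp (Finset.mem_filter.mp hbF).1).2
    rw [Finset.mem_Icc]
    omega
  have hbound2 : ∑ b ∈ F.erase b₀, 1/(b:ℝ)^3 ≤ 1/(2*(u:ℝ)^2) := by
    calc ∑ b ∈ F.erase b₀, 1/(b:ℝ)^3
        ≤ ∑ b ∈ Icc (b₀ + 1) X, 1/(b:ℝ)^3 := by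
          apply Finset.sum_le_sum_of_subset_of_nonneg hsubset
          intro i _ _; positivity
      _ ≤ 1/(2*(b₀:ℝ)^2) - 1/(2*(X:ℝ)^2) := sum_Icc_inv_cube_le hb₀1 hb₀X
      _ ≤ 1/(2*(b₀:ℝ)^2) := by
          have hX : (0:ℝ) < (X:ℝ) := by
            have : 1 ≤ X := le_trans hb₀1 hb₀X
            exact_mod_cast this
          have : 0 < 1/(2*(X:ℝ)^2) := by positivity
          linarith
      _ ≤ 1/(2*(u:ℝ)^2) := by
          have hub : u ≤ (b₀:ℝ) := by
            by_contra hcon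
            push_neg at hcon
            have : (b₀:ℝ)^3 < u^3 := pow_lt_pow_left₀ hcon (by positivity) (by norm_num)
            rw [hu3] at this
            linarith
          have hu2 : u^2 ≤ (b₀:ℝ)^2 := by nlinarith
          apply one_div_le_one_div_of_le (by positivity)
          linarith
  linarith

lemma count_small (X : ℕ) {y : ℝ} (hy0 : 0 < y) :
    ((((Icc 1 X)).filter (fun b : ℕ => ¬ y ≤ (b:ℝ)^3)).card : ℝ) ≤ y^((1:ℝ)/3) := by
  classical
  set u := y^((1:ℝ)/3) with hu
  have hu0 : 0 < u := Real.rpow_pos_of_pos hy0 _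
  have hu3 : u^3 = y := by
    rw [hu, ← Real.rpow_natCast (y ^ ((1:ℝ)/3)) 3, ← Real.rpow_mul hy0.le]
    norm_num
  have hsubset : (Icc 1 X).filter (fun b : ℕ => ¬ y ≤ (b:ℝ)^3) ⊆ Icc 1 ⌊u⌋₊ := by
    intro b hb
    rw [Finset.mem_filter, Finset.mem_Icc] at hb
    obtain ⟨⟨h1, _⟩, h2⟩ := hb
    push_neg at h2
    rw [Finset.mem_Icc]
    refine ⟨h1, Nat.le_floor ?_⟩
    by_contra hcon
    push_neg at hcon
    have hb0 : (0:ℝ) ≤ u := hu0.le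
    have : u^3 ≤ (b:ℝ)^3 := (pow_lt_pow_left₀ hcon hb0 (by norm_num)).le
    rw [hu3] at this
    linarith
  calc ((((Icc 1 X)).filter (fun b : ℕ => ¬ y ≤ (b:ℝ)^3)).card : ℝ)
      ≤ ((Icc 1 ⌊u⌋₊).card : ℝ) := by
        exact_mod_cast Finset.card_le_card hsubset
    _ = (⌊u⌋₊ : ℝ) := by rw [Nat.card_Icc]; push_cast; ring
    _ ≤ u := Nat.floor_le hu0.le

set_option maxHeartbeats 1000000 in
/-- With `λ = ζ(3/2)/(2ζ(3))`, for `x > y > 8` the number of pnds `n ≤ x` whose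
square-full part is at least `y` is at most `λ x y^(-1/2) + 2 x y^(-2/3)`. -/
theorem pnd_large_squarefull_count (lam x y : ℝ)
    (hlam : (lam : ℂ) = riemannZeta (3 / 2) / (2 * riemannZeta 3))
    (hy : 8 < y) (hxy : y < x) :
    ({n : ℕ | Pnd n ∧ (n : ℝ) ≤ x ∧ y ≤ (sqfullPart n : ℝ)}.ncard : ℝ) ≤
      lam * x * y ^ (-(1 / 2 : ℝ)) + 2 * x * y ^ (-(2 / 3 : ℝ)) := by
  classical
  have hy0 : (0:ℝ) < y := by linarith
  have hx0 : (0:ℝ) < x := by linarith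
  have hlamval : lam = Aval / (2 * Bval) := by
    have h : (lam : ℂ) = ((Aval / (2 * Bval) : ℝ) : ℂ) := by
      rw [hlam, zeta32_eq, zeta3_eq]
      push_cast
      ring
    exact_mod_cast h
  set X := ⌊x⌋₊ with hX
  set S := {n : ℕ | Pnd n ∧ (n : ℝ) ≤ x ∧ y ≤ (sqfullPart n : ℝ)} with hS
  -- decomposition choice
  have hdec : ∀ n : ℕ, ∃ p : ℕ × ℕ,
      0 < p.1 ∧ 0 < p.2 ∧ Squarefree p.1 ∧ p.1 ^ 3 * p.2 ^ 2 = sqfullPart n := by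
    intro n
    obtain ⟨a, b, ha, hb, hsf, heq⟩ := sqfullPart_cube_sq n
    exact ⟨(b, a), hb, ha, hsf, heq⟩
  choose g hg1 hg2 hg3 hg4 using hdec
  set ψ : ℕ → ℕ := fun n =>
    if Odd (n / sqfullPart n) then n / sqfullPart n else (n / sqfullPart n) / 2 with hψdef
  set Φ : ℕ → ℕ × ℕ × ℕ := fun n => ((g n).1, (g n).2, ψ n) with hΦdef
  set P : ℕ × ℕ × ℕ → Prop := fun t =>
    Squarefree t.1 ∧ y ≤ (t.1:ℝ)^3 * (t.2.1:ℝ)^2 ∧ Odd t.2.2 ∧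
      (t.2.2:ℝ) * ((t.1:ℝ)^3 * (t.2.1:ℝ)^2) ≤ x with hPdef
  set T := ((Icc 1 X) ×ˢ ((Icc 1 X) ×ˢ (Icc 1 X))).filter (fun t => P t) with hTdef
  -- basic facts about ψ on S
  have hq_or : ∀ n ∈ S, (n / sqfullPart n = ψ n ∨ n / sqfullPart n = 2 * ψ n) ∧
      Odd (ψ n) ∧ 1 ≤ ψ n ∧ ψ n ≤ n / sqfullPart n := by
    intro n hn
    have hn0 : n ≠ 0 := hn.1.1.ne'
    obtain ⟨hsf, hmul, hs0⟩ := sqfullPart_decomp n hn0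
    have hq0 : n / sqfullPart n ≠ 0 := by
      intro h; rw [h, zero_mul] at hmul; exact hn0 hmul.symm
    by_cases hodd : Odd (n / sqfullPart n)
    · have hψn : ψ n = n / sqfullPart n := by rw [hψdef]; simp only [if_pos hodd]
      exact ⟨Or.inl hψn.symm, hψn ▸ hodd, hψn ▸ Nat.pos_of_ne_zero hq0, le_of_eq hψn⟩
    · have heven : Even (n / sqfullPart n) := Nat.not_odd_iff_even.mp hodd
      obtain ⟨k, hk⟩ := heven
      have hψn : ψ n = (n / sqfullPart n) / 2 := by rw [hψdef]; simp only [if_neg hodd]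
      have hq2 : (n / sqfullPart n) / 2 = k := by omega
      have hkodd : Odd k := by
        rcases Nat.even_or_odd k with he | ho
        · exfalso
          obtain ⟨j, hj⟩ := he
          have h4 : 2 * 2 ∣ n / sqfullPart n := ⟨j, by omega⟩
          have := hsf 2 h4
          norm_num at this
        · exact ho
      refine ⟨Or.inr (by omega), by rw [hψn, hq2]; exact hkodd, by omega, by omega⟩
  have hmaps : ∀ n ∈ S, Φ n ∈ (T : Set (ℕ × ℕ × ℕ)) := by
    intro n hn
    obtain ⟨hPnd, hnx, hys⟩ := hn
    have hn0 : n ≠ 0 := hPnd.1.ne'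
    obtain ⟨hsf, hmul, hs0⟩ := sqfullPart_decomp n hn0
    obtain ⟨hqor, hψodd, hψ1, hψle⟩ := hq_or n ⟨hPnd, hnx, hys⟩
    have hsdvd : sqfullPart n ∣ n := Dvd.intro_left _ hmul
    have hsn : sqfullPart n ≤ n := Nat.le_of_dvd hPnd.1 hsdvd
    have hqdvd : n / sqfullPart n ∣ n := ⟨sqfullPart n, hmul.symm⟩
    have hqn : n / sqfullPart n ≤ n := Nat.le_of_dvd hPnd.1 hqdvd
    have hnX : n ≤ X := Nat.le_floor hnx
    have hba : (g n).1 ^ 3 * (g n).2 ^ 2 = sqfullPart n := hg4 n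
    have hb1 : 1 ≤ (g n).1 := hg1 n
    have ha1 : 1 ≤ (g n).2 := hg2 n
    have hbles : (g n).1 ≤ sqfullPart n := by
      calc (g n).1 ≤ (g n).1 ^ 3 := Nat.le_self_pow (by norm_num) _
        _ ≤ (g n).1 ^ 3 * (g n).2 ^ 2 := Nat.le_mul_of_pos_right _ (by positivity)
        _ = sqfullPart n := hba
    have hales : (g n).2 ≤ sqfullPart n := by
      calc (g n).2 ≤ (g n).2 ^ 2 := Nat.le_self_pow (by norm_num) _
        _ ≤ (g n).1 ^ 3 * (g n).2 ^ 2 := Nat.le_mul_of_pos_left _ (by positivity)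
        _ = sqfullPart n := hba
    have hψX : ψ n ≤ X := le_trans (le_trans hψle hqn) hnX
    have hcast : ((g n).1:ℝ)^3 * ((g n).2:ℝ)^2 = (sqfullPart n : ℝ) := by
      exact_mod_cast congrArg (Nat.cast : ℕ → ℝ) hba
    have hψs : (ψ n : ℝ) * (sqfullPart n : ℝ) ≤ x := by
      have hnat : ψ n * sqfullPart n ≤ n := by
        calc ψ n * sqfullPart n ≤ (n / sqfullPart n) * sqfullPart n :=
              Nat.mul_le_mul_right _ hψle
          _ = n := hmul
      calc (ψ n : ℝ) * (sqfullPart n : ℝ) ≤ (n : ℝ) := by exact_mod_cast hnat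
        _ ≤ x := hnx
    have hmem : Φ n ∈ T := by
      rw [hTdef, Finset.mem_filter]
      refine ⟨?_, ?_⟩
      · rw [Finset.mem_product, Finset.mem_product]
        refine ⟨Finset.mem_Icc.mpr ⟨hb1, le_trans hbles (le_trans hsn hnX)⟩,
          Finset.mem_Icc.mpr ⟨ha1, le_trans hales (le_trans hsn hnX)⟩,
          Finset.mem_Icc.mpr ⟨hψ1, hψX⟩⟩
      · rw [hPdef]
        refine ⟨hg3 n, ?_, hψodd, ?_⟩
        · rw [hcast]; exact hys
        · rw [hcast]; exact hψs
    exact Finset.mem_coe.mpr hmem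
  have hinj : Set.InjOn Φ S := by
    intro n₁ h₁ n₂ h₂ heq
    have hP1 : Pnd n₁ := h₁.1
    have hP2 : Pnd n₂ := h₂.1
    obtain ⟨hqor₁, _, _, _⟩ := hq_or n₁ h₁
    obtain ⟨hqor₂, _, _, _⟩ := hq_or n₂ h₂
    obtain ⟨hsf₁, hmul₁, _⟩ := sqfullPart_decomp n₁ hP1.1.ne'
    obtain ⟨hsf₂, hmul₂, _⟩ := sqfullPart_decomp n₂ hP2.1.ne'
    have hcomp : (g n₁).1 = (g n₂).1 ∧ (g n₁).2 = (g n₂).2 ∧ ψ n₁ = ψ n₂ := by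
      rw [hΦdef] at heq
      simpa [Prod.ext_iff] using heq
    have hs_eq : sqfullPart n₁ = sqfullPart n₂ := by
      rw [← hg4 n₁, ← hg4 n₂, hcomp.1, hcomp.2.1]
    have hψeq := hcomp.2.2
    rcases hqor₁ with hA | hA <;> rcases hqor₂ with hB | hB
    · rw [← hmul₁, ← hmul₂, hA, hB, hψeq, hs_eq]
    · exact pnd_dvd_eq hP1 hP2 ⟨2, by rw [← hmul₁, ← hmul₂, hA, hB, hψeq, hs_eq]; ring⟩
    · exact (pnd_dvd_eq hP2 hP1 ⟨2, by rw [← hmul₁, ← hmul₂, hA, hB, hψeq, hs_eq]; ring⟩).symm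
    · rw [← hmul₁, ← hmul₂, hA, hB, hψeq, hs_eq]
  have hcount : (S.ncard : ℝ) ≤ (T.card : ℝ) := by
    have h := Set.ncard_le_ncard_of_injOn Φ hmaps hinj (T.finite_toSet)
    rw [Set.ncard_coe_finset] at h
    exact_mod_cast h
  -- fiberwise counting
  set w : ℕ × ℕ → ℝ := fun p => (x / ((p.1:ℝ)^3 * (p.2:ℝ)^2) + 1)/2 with hwdef
  set Q := ((Icc 1 X) ×ˢ (Icc 1 X)).filter (fun p : ℕ × ℕ =>
    Squarefree p.1 ∧ y ≤ (p.1:ℝ)^3 * (p.2:ℝ)^2 ∧ (p.1:ℝ)^3 * (p.2:ℝ)^2 ≤ x) with hQdef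
  have hfibmap : ∀ t ∈ T, (t.1, t.2.1) ∈ Q := by
    intro t ht
    rw [hTdef, Finset.mem_filter, Finset.mem_product, Finset.mem_product] at ht
    obtain ⟨⟨hb, ha, hm⟩, hPt⟩ := ht
    rw [hPdef] at hPt
    obtain ⟨hsf, hyb, hodd, hx'⟩ := hPt
    rw [hQdef, Finset.mem_filter, Finset.mem_product]
    have hm1 : 1 ≤ t.2.2 := (Finset.mem_Icc.mp hm).1
    have hm1R : (1:ℝ) ≤ (t.2.2:ℝ) := by exact_mod_cast hm1
    have hs0 : (0:ℝ) ≤ (t.1:ℝ)^3 * (t.2.1:ℝ)^2 := by positivity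
    exact ⟨⟨hb, ha⟩, hsf, hyb, by nlinarith⟩
  have hcardT : T.card = ∑ p ∈ Q, ((T.filter (fun t => (t.1, t.2.1) = p)).card) :=
    Finset.card_eq_sum_card_fiberwise hfibmap
  have hfib_le : ∀ p ∈ Q, ((T.filter (fun t => (t.1, t.2.1) = p)).card : ℝ) ≤ w p := by
    intro p hp
    rw [hQdef, Finset.mem_filter, Finset.mem_product] at hp
    obtain ⟨⟨hbmem, hamem⟩, hsfp, hyp, hxp⟩ := hp
    have hb1 : 1 ≤ p.1 := (Finset.mem_Icc.mp hbmem).1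
    have ha1 : 1 ≤ p.2 := (Finset.mem_Icc.mp hamem).1
    have hsp0 : (0:ℝ) < (p.1:ℝ)^3 * (p.2:ℝ)^2 := by
      have hbc : (0:ℝ) < (p.1:ℝ) := by exact_mod_cast hb1
      have hac : (0:ℝ) < (p.2:ℝ) := by exact_mod_cast ha1
      positivity
    set K := ⌊(x / ((p.1:ℝ)^3 * (p.2:ℝ)^2) + 1)/2⌋₊ with hK
    have hcard : (T.filter (fun t => (t.1, t.2.1) = p)).card ≤ (Icc 1 K).card := by
      apply Finset.card_le_card_of_injOn (fun t => (t.2.2 + 1)/2)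
      · intro t ht
        rw [Finset.mem_coe, Finset.mem_filter] at ht
        obtain ⟨htT, htp⟩ := ht
        rw [hTdef, Finset.mem_filter] at htT
        obtain ⟨_, hPt⟩ := htT
        rw [hPdef] at hPt
        obtain ⟨_, _, hodd, hxle⟩ := hPt
        have ht1 : t.1 = p.1 := congrArg Prod.fst htp
        have ht2 : t.2.1 = p.2 := congrArg (fun q : ℕ × ℕ => q.2) htp
        rw [ht1, ht2] at hxle
        obtain ⟨j, hj⟩ := hodd
        have hmx : (t.2.2 : ℝ) ≤ x / ((p.1:ℝ)^3 * (p.2:ℝ)^2) := by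
          rw [le_div_iff₀ hsp0]
          exact hxle
        rw [Finset.mem_coe, Finset.mem_Icc]; beta_reduce
        constructor
        · omega
        · rw [show (t.2.2 + 1)/2 = j + 1 by omega]
          apply Nat.le_floor
          have : (t.2.2 : ℝ) = 2 * (j:ℝ) + 1 := by exact_mod_cast hj
          push_cast
          linarith
      · intro t ht t' ht' hval
        simp only [Finset.coe_filter, Set.mem_setOf_eq] at ht ht'
        obtain ⟨htT, htp⟩ := ht
        obtain ⟨htT', htp'⟩ := ht'
        rw [hTdef, Finset.mem_filter, hPdef] at htT htT'
        obtain ⟨_, _, _, hodd, _⟩ := htT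
        obtain ⟨_, _, _, hodd', _⟩ := htT'
        obtain ⟨j, hj⟩ := hodd
        obtain ⟨j', hj'⟩ := hodd'
        dsimp only at hval
        have h3 : t.2.2 = t'.2.2 := by omega
        have a1 : t.2.1 = p.2 := congrArg Prod.snd htp
        have a2 : t'.2.1 = p.2 := congrArg Prod.snd htp'
        have b1 : t.1 = p.1 := congrArg Prod.fst htp
        have b2 : t'.1 = p.1 := congrArg Prod.fst htp'
        have h1 : t.1 = t'.1 := by rw [b1, b2]
        have h2 : t.2.1 = t'.2.1 := by rw [a1, a2]
        exact Prod.ext h1 (Prod.ext h2 h3)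
    calc ((T.filter (fun t => (t.1, t.2.1) = p)).card : ℝ)
        ≤ ((Icc 1 K).card : ℝ) := by exact_mod_cast hcard
      _ = (K : ℝ) := by rw [Nat.card_Icc]; push_cast; ring
      _ ≤ w p := by
          rw [hwdef]
          exact Nat.floor_le (by positivity)
  have hTleQ : (T.card : ℝ) ≤ ∑ p ∈ Q, w p := by
    rw [hcardT]
    push_cast
    exact Finset.sum_le_sum hfib_le
  -- step C: per-b bounds
  have hinner : ∀ b ∈ Icc 1 X, ∑ a ∈ Icc 1 X,
      (if (Squarefree b ∧ y ≤ (b:ℝ)^3 * (a:ℝ)^2 ∧ (b:ℝ)^3 * (a:ℝ)^2 ≤ x)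
        then w (b, a) else 0)
      ≤ (if y ≤ (b:ℝ)^3 then x/(b:ℝ)^3 else 0)
        + (if ¬ y ≤ (b:ℝ)^3 ∧ Squarefree b
            then (x/2) * (1/(Real.sqrt ((b:ℝ)^3) * Real.sqrt y)) else 0)
        + (if ¬ y ≤ (b:ℝ)^3 then x/y else 0) := by
    intro b hb
    have hb1 : 1 ≤ b := (Finset.mem_Icc.mp hb).1
    have hb0 : 0 < b := hb1
    have hbc : (0:ℝ) < (b:ℝ) := by exact_mod_cast hb1
    by_cases hyb : y ≤ (b:ℝ)^3
    · rw [if_pos hyb, if_neg (by tauto), if_neg (by tauto)]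
      have hpoint : ∀ a ∈ Icc 1 X,
          (if (Squarefree b ∧ y ≤ (b:ℝ)^3 * (a:ℝ)^2 ∧ (b:ℝ)^3 * (a:ℝ)^2 ≤ x)
            then w (b, a) else 0)
          ≤ (if ((b:ℝ)^3 * (a:ℝ)^2 ≤ x)
              then (x / ((b:ℝ)^3 * (a:ℝ)^2) + 1)/2 else 0) := by
        intro a _
        by_cases hcond : Squarefree b ∧ y ≤ (b:ℝ)^3 * (a:ℝ)^2 ∧ (b:ℝ)^3 * (a:ℝ)^2 ≤ x
        · rw [if_pos hcond, if_pos hcond.2.2]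
        · rw [if_neg hcond]
          split_ifs with h
          · have : (0:ℝ) ≤ (a:ℝ)^2 := by positivity
            positivity
          · exact le_refl 0
      calc ∑ a ∈ Icc 1 X, (if (Squarefree b ∧ y ≤ (b:ℝ)^3 * (a:ℝ)^2 ∧ (b:ℝ)^3 * (a:ℝ)^2 ≤ x)
            then w (b, a) else 0)
          ≤ ∑ a ∈ Icc 1 X, (if ((b:ℝ)^3 * (a:ℝ)^2 ≤ x)
              then (x / ((b:ℝ)^3 * (a:ℝ)^2) + 1)/2 else 0) := Finset.sum_le_sum hpoint
        _ ≤ x/(b:ℝ)^3 := inner_case1 hx0.le X b hb0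
        _ = x/(b:ℝ)^3 + 0 + 0 := by ring
    · by_cases hsf : Squarefree b
      · rw [if_neg hyb, if_pos ⟨hyb, hsf⟩, if_pos hyb]
        have hpoint : ∀ a ∈ Icc 1 X,
            (if (Squarefree b ∧ y ≤ (b:ℝ)^3 * (a:ℝ)^2 ∧ (b:ℝ)^3 * (a:ℝ)^2 ≤ x)
              then w (b, a) else 0)
            ≤ (if (y ≤ (b:ℝ)^3 * (a:ℝ)^2 ∧ (b:ℝ)^3 * (a:ℝ)^2 ≤ x)
                then (x / ((b:ℝ)^3 * (a:ℝ)^2) + 1)/2 else 0) := by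
          intro a _
          by_cases hcond : Squarefree b ∧ y ≤ (b:ℝ)^3 * (a:ℝ)^2 ∧ (b:ℝ)^3 * (a:ℝ)^2 ≤ x
          · rw [if_pos hcond, if_pos hcond.2]
          · rw [if_neg hcond]
            split_ifs with h
            · have : (0:ℝ) ≤ (a:ℝ)^2 := by positivity
              positivity
            · exact le_refl 0
        calc ∑ a ∈ Icc 1 X, (if (Squarefree b ∧ y ≤ (b:ℝ)^3 * (a:ℝ)^2 ∧ (b:ℝ)^3 * (a:ℝ)^2 ≤ x)
              then w (b, a) else 0)
            ≤ ∑ a ∈ Icc 1 X, (if (y ≤ (b:ℝ)^3 * (a:ℝ)^2 ∧ (b:ℝ)^3 * (a:ℝ)^2 ≤ x)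
                then (x / ((b:ℝ)^3 * (a:ℝ)^2) + 1)/2 else 0) := Finset.sum_le_sum hpoint
          _ ≤ (x/2) * (1/(Real.sqrt ((b:ℝ)^3) * Real.sqrt y)) + x/y :=
              inner_case2 hx0.le hy0 X b hb0 (lt_of_not_ge hyb)
          _ = 0 + (x/2) * (1/(Real.sqrt ((b:ℝ)^3) * Real.sqrt y)) + x/y := by ring
      · have hzero : ∀ a ∈ Icc 1 X,
            (if (Squarefree b ∧ y ≤ (b:ℝ)^3 * (a:ℝ)^2 ∧ (b:ℝ)^3 * (a:ℝ)^2 ≤ x)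
              then w (b, a) else 0) = 0 := by
          intro a _
          rw [if_neg (by tauto)]
        rw [Finset.sum_eq_zero hzero, if_neg hyb, if_neg (by tauto), if_pos hyb]
        positivity
  -- split the three sums
  have hS3 : (∑ b ∈ Icc 1 X, if y ≤ (b:ℝ)^3 then x/(b:ℝ)^3 else 0)
      ≤ x * (1/y + 1/(2*(y^((1:ℝ)/3))^2)) := by
    rw [← Finset.sum_filter]
    have heq : ∑ b ∈ (Icc 1 X).filter (fun b : ℕ => y ≤ (b:ℝ)^3), x/(b:ℝ)^3
        = x * ∑ b ∈ (Icc 1 X).filter (fun b : ℕ => y ≤ (b:ℝ)^3), 1/(b:ℝ)^3 := by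
      rw [Finset.mul_sum]
      apply Finset.sum_congr rfl
      intro b _
      rw [mul_one_div]
    rw [heq]
    exact mul_le_mul_of_nonneg_left (tail_cubes X hy0) hx0.le
  have hsy : (0:ℝ) < Real.sqrt y := Real.sqrt_pos.mpr hy0
  have hS1 : (∑ b ∈ Icc 1 X, if ¬ y ≤ (b:ℝ)^3 ∧ Squarefree b
        then (x/2) * (1/(Real.sqrt ((b:ℝ)^3) * Real.sqrt y)) else 0)
      ≤ (x/(2*Real.sqrt y)) * Sval := by
    have hpoint : ∀ b ∈ Icc 1 X, (if ¬ y ≤ (b:ℝ)^3 ∧ Squarefree b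
          then (x/2) * (1/(Real.sqrt ((b:ℝ)^3) * Real.sqrt y)) else 0)
        ≤ (x/(2*Real.sqrt y)) * (if Squarefree b then 1/Real.sqrt ((b:ℝ)^3) else 0) := by
      intro b hb
      have hb1 : 1 ≤ b := (Finset.mem_Icc.mp hb).1
      have hbc : (0:ℝ) < (b:ℝ) := by exact_mod_cast hb1
      have hbb : (0:ℝ) < Real.sqrt ((b:ℝ)^3) := Real.sqrt_pos.mpr (by positivity)
      by_cases hc : ¬ y ≤ (b:ℝ)^3 ∧ Squarefree b
      · rw [if_pos hc, if_pos hc.2]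
        apply le_of_eq
        rw [mul_one_div, mul_one_div, div_div, div_div]
        ring_nf
      · rw [if_neg hc]
        split_ifs with h
        · positivity
        · simp
    calc (∑ b ∈ Icc 1 X, if ¬ y ≤ (b:ℝ)^3 ∧ Squarefree b
          then (x/2) * (1/(Real.sqrt ((b:ℝ)^3) * Real.sqrt y)) else 0)
        ≤ ∑ b ∈ Icc 1 X, (x/(2*Real.sqrt y)) * (if Squarefree b then 1/Real.sqrt ((b:ℝ)^3) else 0) :=
          Finset.sum_le_sum hpoint
      _ = (x/(2*Real.sqrt y)) * ∑ b ∈ Icc 1 X, (if Squarefree b then 1/Real.sqrt ((b:ℝ)^3) else 0) := by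
          rw [Finset.mul_sum]
      _ ≤ (x/(2*Real.sqrt y)) * Sval := by
          apply mul_le_mul_of_nonneg_left _ (by positivity)
          exact summable_Sind.sum_le_tsum _ (fun b _ => by split_ifs <;> positivity)
  have hS1' : (x/(2*Real.sqrt y)) * Sval ≤ lam * x * y^(-((1:ℝ)/2)) := by
    have hSle : Sval ≤ Aval / Bval := by
      rw [le_div_iff₀ B_pos]
      exact Sval_mul_B_le
    have h12 : y^(-((1:ℝ)/2)) = 1/Real.sqrt y := by
      rw [Real.rpow_neg hy0.le, Real.sqrt_eq_rpow]
      norm_num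
    rw [h12, hlamval]
    have hB0 : Bval ≠ 0 := ne_of_gt B_pos
    calc (x/(2*Real.sqrt y)) * Sval ≤ (x/(2*Real.sqrt y)) * (Aval/Bval) :=
          mul_le_mul_of_nonneg_left hSle (by positivity)
      _ = Aval/(2*Bval) * x * (1/Real.sqrt y) := by
          field_simp
  have hS2 : (∑ b ∈ Icc 1 X, if ¬ y ≤ (b:ℝ)^3 then x/y else 0)
      ≤ y^((1:ℝ)/3) * (x/y) := by
    rw [← Finset.sum_filter, Finset.sum_const, nsmul_eq_mul]
    exact mul_le_mul_of_nonneg_right (count_small X hy0) (by positivity)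
  -- final arithmetic
  set u := y^((1:ℝ)/3) with hu
  have hu0 : 0 < u := Real.rpow_pos_of_pos hy0 _
  have hu3 : u^3 = y := by
    rw [hu, ← Real.rpow_natCast (y ^ ((1:ℝ)/3)) 3, ← Real.rpow_mul hy0.le]
    norm_num
  have hu2 : (2:ℝ) ≤ u := by
    by_contra hcon
    push_neg at hcon
    have : u^3 < 2^3 := pow_lt_pow_left₀ hcon hu0.le (by norm_num)
    rw [hu3] at this
    norm_num at this
    linarith
  have h23 : y^(-((2:ℝ)/3)) = u / y := by
    rw [show (-((2:ℝ)/3)) = (1:ℝ)/3 - 1 by norm_num, Real.rpow_sub hy0, Real.rpow_one, hu]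
  have hqq : 1/(2*u^2) = u/(2*y) := by
    rw [← hu3]
    field_simp
  have herr : x * (1/y + 1/(2*u^2)) + u * (x/y) ≤ 2 * x * y^(-((2:ℝ)/3)) := by
    rw [h23, hqq]
    have h1y : 1/y ≤ u/(2*y) := by
      rw [div_le_div_iff₀ hy0 (by positivity)]
      nlinarith
    have e1 : x*(1/y + u/(2*y)) ≤ x*(u/y) := by
      apply mul_le_mul_of_nonneg_left _ hx0.le
      have : u/(2*y) + u/(2*y) = u/y := by ring
      linarith
    have e2 : u*(x/y) = x*(u/y) := by ring
    have e3 : 2*x*(u/y) = x*(u/y) + x*(u/y) := by ring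
    linarith
  -- final chain
  have hfinal := calc (S.ncard : ℝ)
      ≤ (T.card : ℝ) := hcount
    _ ≤ ∑ p ∈ Q, w p := hTleQ
    _ = ∑ b ∈ Icc 1 X, ∑ a ∈ Icc 1 X,
        (if (Squarefree b ∧ y ≤ (b:ℝ)^3 * (a:ℝ)^2 ∧ (b:ℝ)^3 * (a:ℝ)^2 ≤ x)
          then w (b, a) else 0) := by
        rw [hQdef, Finset.sum_filter, Finset.sum_product]
    _ ≤ ∑ b ∈ Icc 1 X, ((if y ≤ (b:ℝ)^3 then x/(b:ℝ)^3 else 0)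
        + (if ¬ y ≤ (b:ℝ)^3 ∧ Squarefree b
            then (x/2) * (1/(Real.sqrt ((b:ℝ)^3) * Real.sqrt y)) else 0)
        + (if ¬ y ≤ (b:ℝ)^3 then x/y else 0)) := Finset.sum_le_sum hinner
    _ = (∑ b ∈ Icc 1 X, if y ≤ (b:ℝ)^3 then x/(b:ℝ)^3 else 0)
        + (∑ b ∈ Icc 1 X, if ¬ y ≤ (b:ℝ)^3 ∧ Squarefree b
            then (x/2) * (1/(Real.sqrt ((b:ℝ)^3) * Real.sqrt y)) else 0)
        + (∑ b ∈ Icc 1 X, if ¬ y ≤ (b:ℝ)^3 then x/y else 0) := by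
        rw [Finset.sum_add_distrib, Finset.sum_add_distrib]
    _ ≤ x * (1/y + 1/(2*u^2)) + (x/(2*Real.sqrt y)) * Sval + u * (x/y) := by
        have := hS2
        have := hS3
        have := hS1
        apply add_le_add (add_le_add hS3 hS1) hS2
  calc (S.ncard : ℝ) ≤ x * (1/y + 1/(2*u^2)) + (x/(2*Real.sqrt y)) * Sval + u * (x/y) := hfinal
    _ ≤ lam * x * y ^ (-(1 / 2 : ℝ)) + 2 * x * y ^ (-(2 / 3 : ℝ)) := by
        have h1 := hS1'
        have h2 := herr
        have hgoal1 : lam * x * y^(-((1:ℝ)/2)) = lam * x * y ^ (-(1 / 2 : ℝ)) := by norm_num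
        have hgoal2 : (2:ℝ) * x * y^(-((2:ℝ)/3)) = 2 * x * y ^ (-(2 / 3 : ℝ)) := by norm_num
        linarith
end

section
/- If n is a primitive nondeficient number whose largest prime factor P(n) satisfies P(n)² ∤ n, then 2 ≤ σ(n)/n < 2 + 2/P(n). -/
open ArithmeticFunction
open scoped ArithmeticFunction.sigma

/-- The largest prime factor of `n`, with the convention `P 1 = 1`. -/
def P (n : ℕ) : ℕ := max 1 (n.primeFactors.sup _root_.id)

/-- If `n` is a pnd with `P(n)² ∤ n`, then `2 ≤ σ(n)/n < 2 + 2/P(n)`. -/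
theorem pnd_h_bounds (n : ℕ) (hn : Pnd n) (hP : ¬ (P n) ^ 2 ∣ n) :
    2 ≤ (σ 1 n : ℝ) / n ∧ (σ 1 n : ℝ) / n < 2 + 2 / (P n : ℝ) := by
  obtain ⟨hn0, hge, hmin⟩ := hn
  have hn1 : 1 < n := by
    by_contra h
    have : n = 1 := by omega
    subst this
    simp [sigma_one_apply] at hge
  have hne : n.primeFactors.Nonempty := Nat.nonempty_primeFactors.mpr hn1
  obtain ⟨p, hpmem, hpeq⟩ := Finset.exists_mem_eq_sup _ hne _root_.id
  have hp : p.Prime := Nat.prime_of_mem_primeFactors hpmem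
  simp only [_root_.id] at hpeq
  have hPn : P n = p := by
    unfold P
    rw [hpeq]
    exact max_eq_right hp.one_lt.le
  rw [hPn] at hP ⊢
  have hdvd : p ∣ n := Nat.dvd_of_mem_primeFactors hpmem
  set m := n / p with hm
  have hnm : n = p * m := (Nat.mul_div_cancel' hdvd).symm
  have hpm : ¬ p ∣ m := by
    intro h
    exact hP (by rw [hnm, pow_two]; exact mul_dvd_mul_left p h)
  have hcop : Nat.Coprime p m := (Nat.Prime.coprime_iff_not_dvd hp).mpr hpm
  have hm0 : 0 < m := by
    rcases Nat.eq_zero_or_pos m with h | h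
    · rw [hnm, h, mul_zero] at hn0; omega
    · exact h
  have hmlt : m < n := Nat.div_lt_self hn0 hp.one_lt
  have hσm : σ 1 m < 2 * m := hmin m ⟨p, by rw [hnm]; ring⟩ hmlt
  have hσp : σ 1 p = p + 1 := by
    rw [sigma_one_apply, hp.divisors, Finset.sum_pair hp.one_lt.ne]
    omega
  have hσn : σ 1 n = (p + 1) * σ 1 m := by
    rw [hnm, isMultiplicative_sigma.map_mul_of_coprime hcop, hσp]
  have key : σ 1 n * p < (2 * p + 2) * n := by
    rw [hσn, hnm]
    calc (p + 1) * σ 1 m * p < (p + 1) * (2 * m) * p := by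
          have : 0 < p + 1 := by omega
          exact (Nat.mul_lt_mul_right hp.pos).mpr ((Nat.mul_lt_mul_left this).mpr hσm)
      _ = (2 * p + 2) * (p * m) := by ring
  have hnR : (0 : ℝ) < n := by exact_mod_cast hn0
  have hpR : (0 : ℝ) < p := by exact_mod_cast hp.pos
  constructor
  · rw [le_div_iff₀ hnR]
    exact_mod_cast (by linarith [hge] : 2 * n ≤ σ 1 n)
  · rw [div_lt_iff₀ hnR]
    have h2 : (2 : ℝ) + 2 / p = (2 * p + 2) / p := by field_simp
    rw [h2, div_mul_eq_mul_div, lt_div_iff₀ hpR]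
    have : (σ 1 n : ℝ) * p < (2 * p + 2) * n := by exact_mod_cast key
    linarith
end

section
/- If d₁ and d₂ are distinct squarefree positive integers, then σ(d₁)/d₁ ≠ σ(d₂)/d₂. -/
open ArithmeticFunction
open scoped ArithmeticFunction.sigma

lemma sigma_one_squarefree (n : ℕ) (hn : Squarefree n) :
    σ 1 n = ∏ p ∈ n.primeFactors, (p + 1) := by
  nth_rewrite 1 [← Nat.prod_primeFactors_of_squarefree hn]
  rw [ArithmeticFunction.IsMultiplicative.map_prod_of_subset_primeFactors
    isMultiplicative_sigma n _ (subset_refl _)]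
  exact Finset.prod_congr rfl fun p hp => by
    have hpp := Nat.prime_of_mem_primeFactors hp
    rw [sigma_one_apply, hpp.divisors, Finset.sum_pair hpp.one_lt.ne]
    omega

lemma sigma_one_gt (n : ℕ) (hn : 1 < n) : n < σ 1 n := by
  rw [sigma_one_apply]
  have h : ({1, n} : Finset ℕ) ⊆ n.divisors := by
    intro d hd
    simp only [Finset.mem_insert, Finset.mem_singleton] at hd
    rcases hd with rfl | rfl
    · exact Nat.one_mem_divisors.2 (by omega)
    · exact Nat.mem_divisors_self _ (by omega)
  calc n < 1 + n := by omega
    _ = ∑ d ∈ ({1, n} : Finset ℕ), d := by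
        rw [Finset.sum_pair (by omega)]
    _ ≤ ∑ d ∈ n.divisors, d := Finset.sum_le_sum_of_subset h

lemma aux_case (a b : ℕ) (ha : Squarefree a) (hb : Squarefree b)
    (hab : Nat.Coprime a b) (heq : σ 1 a * b = σ 1 b * a)
    (p : ℕ) (hp : p ∈ (a * b).primeFactors)
    (hmax : ∀ q ∈ (a * b).primeFactors, q ≤ p) (hpa : p ∣ a) : False := by
  have ha0 : a ≠ 0 := ha.ne_zero
  have hb0 : b ≠ 0 := hb.ne_zero
  have hpp : p.Prime := Nat.prime_of_mem_primeFactors hp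
  have hpb : ¬ p ∣ b := fun h => hpp.one_lt.ne'
    (Nat.dvd_one.mp ((hab : Nat.gcd a b = 1) ▸ Nat.dvd_gcd hpa h))
  -- p divides σ 1 a
  have hpsa : p ∣ σ 1 a := by
    have h1 : p ∣ σ 1 a * b := heq ▸ Dvd.dvd.mul_left hpa _
    exact (Nat.Coprime.dvd_of_dvd_mul_right
      ((Nat.Prime.coprime_iff_not_dvd hpp).2 hpb) h1)
  rw [sigma_one_squarefree a ha] at hpsa
  obtain ⟨q, hq, hpq⟩ := hpp.prime.exists_mem_finset_dvd hpsa
  have hqp : q.Prime := Nat.prime_of_mem_primeFactors hq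
  have hqle : q ≤ p := hmax q (by
    rw [Nat.mem_primeFactors] at hq ⊢
    exact ⟨hq.1, hq.2.1.mul_right b, by positivity⟩)
  have hqne : q ≠ p := by
    rintro rfl
    have h1 : q ∣ 1 := (Nat.dvd_add_right dvd_rfl).mp hpq
    have := Nat.dvd_one.mp h1
    have := hqp.one_lt
    omega
  -- p ∣ q + 1, q + 1 ≤ p + 1, q + 1 < p + 1, q + 1 ≥ 2 so q + 1 = p
  have hq1 : q + 1 = p := by
    have h3 : q + 1 ≤ p := by
      have := lt_of_le_of_ne hqle hqne
      omega
    obtain ⟨k, hk⟩ := hpq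
    have hk0 : k ≠ 0 := by rintro rfl; omega
    have : p ≤ p * k := Nat.le_mul_of_pos_right _ (by omega)
    omega
  -- q even prime consecutive: q = 2, p = 3
  have hq2 : q = 2 := by
    by_contra hq2
    have hodd : Odd q := hqp.odd_of_ne_two hq2
    have : Even (q + 1) := Odd.add_one hodd
    rw [hq1] at this
    have h2q := hqp.two_le
    have hodd' : Odd p := hpp.odd_of_ne_two (by omega)
    exact (Nat.not_even_iff_odd.mpr hodd') this
  have hp3 : p = 3 := by omega
  -- 2 ∣ a and 3 ∣ a, so b has no prime factors: b = 1
  have h2a : (2 : ℕ) ∣ a := Nat.dvd_of_mem_primeFactors (hq2 ▸ hq)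
  have h3a : (3 : ℕ) ∣ a := hp3 ▸ hpa
  have hb1 : b = 1 := by
    by_contra hb1
    have hb2 : 1 < b := by omega
    obtain ⟨r, hr⟩ := (Nat.nonempty_primeFactors.mpr (by omega : 1 < b))
    have hrp : r.Prime := Nat.prime_of_mem_primeFactors hr
    have hrb : r ∣ b := Nat.dvd_of_mem_primeFactors hr
    have hrle : r ≤ p := hmax r (by
      rw [Nat.mem_primeFactors] at hr ⊢
      exact ⟨hr.1, hr.2.1.mul_left a, by positivity⟩)
    have hr2 : r ≠ 2 := by
      rintro rfl
      exact (Nat.Prime.coprime_iff_not_dvd Nat.prime_two).1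
        (Nat.Coprime.coprime_dvd_left h2a hab) hrb
    have hr3 : r ≠ 3 := by
      rintro rfl
      exact (Nat.Prime.coprime_iff_not_dvd Nat.prime_three).1
        (Nat.Coprime.coprime_dvd_left h3a hab) hrb
    have := hrp.two_le
    rw [hp3] at hrle
    interval_cases r <;> simp_all
  subst hb1
  simp only [mul_one] at heq
  have : σ 1 1 = 1 := by simp [sigma_one_apply]
  rw [this, one_mul] at heq
  have ha2 : 1 < a := lt_of_lt_of_le (by norm_num) (Nat.le_of_dvd (by omega) h3a)
  exact absurd heq (by have := sigma_one_gt a ha2; omega)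

lemma key (a b : ℕ) (ha : Squarefree a) (hb : Squarefree b)
    (hab : Nat.Coprime a b) (heq : σ 1 a * b = σ 1 b * a) : a = b := by
  by_contra hne
  have ha0 : a ≠ 0 := ha.ne_zero
  have hb0 : b ≠ 0 := hb.ne_zero
  have hab1 : 1 < a * b := by
    rcases Nat.lt_or_ge (a * b) 2 with h | h
    · have h1 : 1 ≤ a * b := Nat.one_le_iff_ne_zero.mpr (by positivity)
      have hab1 : a * b = 1 := by omega
      exact absurd ((Nat.eq_one_of_mul_eq_one_right hab1).trans
        (Nat.eq_one_of_mul_eq_one_left hab1).symm) hne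
    · omega
  obtain ⟨p, hp, hmax⟩ := Finset.exists_max_image ((a*b).primeFactors)
    (fun q => q) (Nat.nonempty_primeFactors.mpr (by omega : 1 < a * b))
  have hpd : p ∣ a * b := Nat.dvd_of_mem_primeFactors hp
  rcases (Nat.prime_of_mem_primeFactors hp).prime.dvd_mul.mp hpd with hpa | hpb
  · exact aux_case a b ha hb hab heq p hp (fun q hq => hmax q hq) hpa
  · exact aux_case b a hb ha hab.symm heq.symm p (by rwa [mul_comm])
      (fun q hq => hmax q (by rwa [mul_comm])) hpb

/-- If `d₁` and `d₂` are distinct squarefree positive integers, then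
`σ(d₁)/d₁ ≠ σ(d₂)/d₂`. -/
theorem squarefree_sigma_ratio_injective (d₁ d₂ : ℕ) (h₁ : 0 < d₁) (h₂ : 0 < d₂)
    (hsf₁ : Squarefree d₁) (hsf₂ : Squarefree d₂) (hne : d₁ ≠ d₂) :
    (σ 1 d₁ : ℚ) / d₁ ≠ (σ 1 d₂ : ℚ) / d₂ := by
  intro h
  have hq : (σ 1 d₁ : ℚ) * d₂ = (σ 1 d₂ : ℚ) * d₁ := by
    field_simp at h
    linarith [h]
  have hnat : σ 1 d₁ * d₂ = σ 1 d₂ * d₁ := by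
    exact_mod_cast hq
  -- split off the gcd
  set g := Nat.gcd d₁ d₂ with hg
  have hg0 : 0 < g := Nat.gcd_pos_of_pos_left _ h₁
  set a := d₁ / g with hadef
  set b := d₂ / g with hbdef
  have hda : d₁ = g * a := (Nat.mul_div_cancel' (Nat.gcd_dvd_left d₁ d₂)).symm
  have hdb : d₂ = g * b := (Nat.mul_div_cancel' (Nat.gcd_dvd_right d₁ d₂)).symm
  have hcab : Nat.Coprime a b := Nat.coprime_div_gcd_div_gcd hg0
  have h1 : Squarefree (g * a) := hda ▸ hsf₁
  have h2 : Squarefree (g * b) := hdb ▸ hsf₂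
  rw [Nat.squarefree_mul_iff] at h1 h2
  have hs1 : σ 1 (g * a) = σ 1 g * σ 1 a := isMultiplicative_sigma.map_mul_of_coprime h1.1
  have hs2 : σ 1 (g * b) = σ 1 g * σ 1 b := isMultiplicative_sigma.map_mul_of_coprime h2.1
  rw [hda, hdb, hs1, hs2] at hnat
  have hsg : 0 < σ 1 g := by
    rw [sigma_one_apply]
    exact Finset.sum_pos (fun i hi => Nat.pos_of_mem_divisors hi)
      ⟨1, Nat.one_mem_divisors.2 (by omega)⟩
  have heq' : σ 1 a * b = σ 1 b * a := by
    have : σ 1 g * g * (σ 1 a * b) = σ 1 g * g * (σ 1 b * a) := by ring_nf; ring_nf at hnat; linarith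
    exact Nat.eq_of_mul_eq_mul_left (by positivity) this
  have : a = b := key a b h1.2.2 h2.2.2 hcab heq'
  exact hne (by rw [hda, hdb, this])
end

section
/- If n is a primitive nondeficient number, then its largest prime factor satisfies P(n) ≤ √(2n). -/
open ArithmeticFunction
open scoped ArithmeticFunction.sigma

/-- The largest prime factor of a primitive nondeficient number `n` is at most
`√(2n)`. -/
theorem pnd_largest_prime_factor_le (n : ℕ) (hn : Pnd n) :
    (P n : ℝ) ≤ Real.sqrt (2 * n) := by
  obtain ⟨hn0, hsig, hdef⟩ := hn
  have hn1 : 1 < n := by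
    by_contra h
    have : n = 1 := by omega
    subst this
    simp [sigma_one_apply] at hsig
  have hne : n.primeFactors.Nonempty := Nat.nonempty_primeFactors.2 hn1
  obtain ⟨p, hpmem, hsup⟩ := Finset.exists_mem_eq_sup n.primeFactors hne _root_.id
  have hp : p.Prime := Nat.prime_of_mem_primeFactors hpmem
  have hpdvd : p ∣ n := Nat.dvd_of_mem_primeFactors hpmem
  have hPn : P n = p := by
    rw [P, hsup]
    exact max_eq_right hp.one_lt.le
  -- factorization
  set t := ordCompl[p] n with ht
  have hcop : Nat.Coprime p t := Nat.coprime_ordCompl hp hn0.ne'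
  obtain ⟨j, hj⟩ : ∃ j, n.factorization p = j + 1 := by
    have := (Nat.Prime.factorization_pos_of_dvd hp hn0.ne' hpdvd)
    exact ⟨n.factorization p - 1, by omega⟩
  have hneq : p ^ (j + 1) * t = n := by
    rw [ht, ← hj]; exact Nat.ordProj_mul_ordCompl_eq_self n p
  set m := p ^ j * t with hm
  have hnm : n = p * m := by rw [hm, ← hneq]; ring
  have ht0 : 0 < t := Nat.ordCompl_pos p hn0.ne'
  have hm0 : 0 < m := Nat.mul_pos (pow_pos hp.pos j) ht0
  have hmn : m < n := by
    rw [hnm]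
    calc m = 1 * m := (one_mul m).symm
    _ < p * m := (Nat.mul_lt_mul_right hm0).2 hp.one_lt
  have hmdef : σ 1 m < 2 * m := hdef m ⟨p, by rw [hnm]; ring⟩ hmn
  -- multiplicativity
  have hσn : σ 1 n = (∑ i ∈ Finset.range (j + 2), p ^ i) * σ 1 t := by
    rw [← hneq, isMultiplicative_sigma.map_mul_of_coprime (hcop.pow_left _),
      sigma_one_apply_prime_pow hp]
  have hσm : σ 1 m = (∑ i ∈ Finset.range (j + 1), p ^ i) * σ 1 t := by
    rw [hm, isMultiplicative_sigma.map_mul_of_coprime (hcop.pow_left _),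
      sigma_one_apply_prime_pow hp]
  -- key inequality : σ n ≤ (p+1) * σ m
  have hkey : σ 1 n ≤ (p + 1) * σ 1 m := by
    rw [hσn, hσm, ← mul_assoc]
    apply Nat.mul_le_mul_right
    have h1 : p ^ j ≤ ∑ i ∈ Finset.range (j + 1), p ^ i :=
      Finset.single_le_sum (f := fun i => p ^ i) (fun i _ => Nat.zero_le _)
        (Finset.self_mem_range_succ j)
    have h2 : ∑ i ∈ Finset.range (j + 2), p ^ i
        = ∑ i ∈ Finset.range (j + 1), p ^ i + p ^ (j + 1) :=
      Finset.sum_range_succ _ _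
    calc ∑ i ∈ Finset.range (j + 2), p ^ i
        = ∑ i ∈ Finset.range (j + 1), p ^ i + p * p ^ j := by rw [h2]; ring
      _ ≤ ∑ i ∈ Finset.range (j + 1), p ^ i + p * ∑ i ∈ Finset.range (j + 1), p ^ i := by
          exact Nat.add_le_add_left (Nat.mul_le_mul_left p h1) _
      _ = (p + 1) * ∑ i ∈ Finset.range (j + 1), p ^ i := by ring
  -- arithmetic: p^2 ≤ 2n
  have h2n : 2 * n ≤ (p + 1) * σ 1 m := le_trans hsig hkey
  have hp1 : p + 1 ≤ 2 * m := by nlinarith [hnm]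
  have hpsq : p ^ 2 ≤ 2 * n := by nlinarith [hnm, hp.one_lt]
  -- conclude
  rw [hPn]
  have h2nn : (0 : ℝ) ≤ 2 * n := by positivity
  rw [show ((p : ℕ) : ℝ) = Real.sqrt ((p : ℝ) ^ 2) by
    rw [Real.sqrt_sq (by positivity)]]
  apply Real.sqrt_le_sqrt
  have : ((p ^ 2 : ℕ) : ℝ) ≤ ((2 * n : ℕ) : ℝ) := Nat.cast_le.2 hpsq
  push_cast at this
  linarith
end

section
/- Let n be a primitive nondeficient number and let m > 1 be an integer all of whose prime factors exceed √(2n). Then m·n is abundant (σ(mn) > 2mn), and every primitive nondeficient divisor of m·n is ≥ n; that is, n is the smallest primitive nondeficient divisor of m·n. -/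
open ArithmeticFunction
open scoped ArithmeticFunction.sigma

lemma geom_aux (p : ℕ) (hp : 1 ≤ p) :
    ∀ k : ℕ, (∑ i ∈ Finset.range k, p ^ i) * (p - 1) + 1 = p ^ k := by
  intro k
  induction k with
  | zero => simp
  | succ k ih =>
    calc (∑ i ∈ Finset.range (k+1), p ^ i) * (p - 1) + 1
        = ((∑ i ∈ Finset.range k, p ^ i) * (p-1) + 1) + p ^ k * (p - 1) := by
          rw [Finset.sum_range_succ]; ring
      _ = p ^ k + p ^ k * (p-1) := by rw [ih]
      _ = p ^ k * (1 + (p-1)) := by ring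
      _ = p ^ k * p := by congr 1; omega
      _ = p ^ (k+1) := by rw [pow_succ]

/-- If `n` is a pnd and `m > 1` has all its prime factors exceeding `√(2n)`,
then `m * n` is abundant and `n` is the smallest pnd divisor of `m * n`. -/
theorem pnd_smallest_divisor_of_abundant (n m : ℕ) (hn : Pnd n) (hm : 1 < m)
    (hp : ∀ p : ℕ, p.Prime → p ∣ m → Real.sqrt (2 * n) < (p : ℝ)) :
    2 * (m * n) < σ 1 (m * n) ∧ ∀ d : ℕ, d ∣ m * n → Pnd d → n ≤ d := by
  have hn0 : 0 < n := hn.1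
  have hm0 : 0 < m := by omega
  have hmn0 : m * n ≠ 0 := by positivity
  -- convert the sqrt hypothesis to squares
  have hp2 : ∀ p : ℕ, p.Prime → p ∣ m → 2 * n < p ^ 2 := by
    intro p pp pm
    have h := hp p pp pm
    have hq : ((2 * n : ℕ) : ℝ) < (p : ℝ) ^ 2 :=
      (Real.sqrt_lt' (by exact_mod_cast pp.pos)).mp (by push_cast; exact_mod_cast h)
    exact_mod_cast hq
  constructor
  · -- abundance of m * n
    have key : 1 + m * σ 1 n ≤ σ 1 (m * n) := by
      have hsub : insert 1 (n.divisors.image (fun d => m * d)) ⊆ (m * n).divisors := by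
        intro x hx
        simp only [Finset.mem_insert, Finset.mem_image, Nat.mem_divisors] at hx ⊢
        rcases hx with rfl | ⟨y, ⟨hy, _⟩, rfl⟩
        · exact ⟨one_dvd _, hmn0⟩
        · exact ⟨mul_dvd_mul_left m hy, hmn0⟩
      have h1not : (1 : ℕ) ∉ n.divisors.image (fun d => m * d) := by
        simp only [Finset.mem_image, Nat.mem_divisors]
        rintro ⟨y, ⟨hy, hn0'⟩, hxy⟩
        have : m ≤ 1 := Nat.le_of_dvd one_pos ⟨y, hxy.symm⟩
        omega
      calc 1 + m * σ 1 n
          = ∑ x ∈ insert 1 (n.divisors.image (fun d => m * d)), x := by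
            rw [Finset.sum_insert h1not, Finset.sum_image
              (fun x _ y _ h => Nat.eq_of_mul_eq_mul_left hm0 h),
              sigma_one_apply, Finset.mul_sum]
        _ ≤ ∑ x ∈ (m * n).divisors, x := Finset.sum_le_sum_of_subset hsub
        _ = σ 1 (m * n) := (sigma_one_apply _).symm
    calc 2 * (m * n) = m * (2 * n) := by ring
      _ ≤ m * σ 1 n := Nat.mul_le_mul_left m hn.2.1
      _ < 1 + m * σ 1 n := by omega
      _ ≤ σ 1 (m * n) := key
  · -- minimality
    intro d hdvd hd
    by_contra hlt'
    push_neg at hlt'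
    obtain ⟨hd0, hdnd, hdmin⟩ := hd
    by_cases hcase : ∀ p : ℕ, p.Prime → p ∣ d → p ^ 2 ≤ 2 * n
    · -- all prime factors of d are small, so d is coprime to m, so d ∣ n
      have hco : Nat.Coprime d m := by
        by_contra hco
        obtain ⟨q, hq, hqd, hqm⟩ := Nat.Prime.not_coprime_iff_dvd.mp hco
        have h1 := hcase q hq hqd
        have h2 := hp2 q hq hqm
        omega
      have hdn : d ∣ n := (Nat.Coprime.dvd_of_dvd_mul_left hco hdvd)
      have := hn.2.2 d hdn hlt'
      omega
    · push_neg at hcase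
      obtain ⟨p, pp, hpd, hpn⟩ := hcase
      -- p is a large prime dividing the pnd d; derive d > n, contradiction
      set a := d.factorization p with ha
      have ha1 : 1 ≤ a := pp.factorization_pos_of_dvd hd0.ne' hpd
      set P := p ^ a with hP
      set e := d / P with he
      have hPe : P * e = d := Nat.ordProj_mul_ordCompl_eq_self d p
      have hpp2 : 2 ≤ p := pp.two_le
      have hP2 : 2 ≤ P := by
        calc 2 ≤ p := hpp2
          _ = p ^ 1 := (pow_one p).symm
          _ ≤ p ^ a := Nat.pow_le_pow_right (by omega) ha1
      have he1 : 1 ≤ e := by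
        rcases Nat.eq_zero_or_pos e with h | h
        · rw [h, mul_zero] at hPe; omega
        · exact h
      have hed : e < d := by
        have : 2 * e ≤ P * e := Nat.mul_le_mul_right e hP2
        omega
      have heddvd : e ∣ d := ⟨P, by rw [← hPe]; ring⟩
      have hcoP : Nat.Coprime P e :=
        Nat.Coprime.pow_left _ (Nat.coprime_ordCompl pp hd0.ne')
      have hsig : σ 1 d = σ 1 P * σ 1 e := by
        rw [← hPe]; exact isMultiplicative_sigma.map_mul_of_coprime hcoP
      have hG : σ 1 e < 2 * e := hdmin e heddvd hed
      have hG1 : 1 ≤ σ 1 e := by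
        rw [sigma_one_apply]
        have : (1 : ℕ) ∈ e.divisors := Nat.one_mem_divisors.mpr (by omega)
        calc 1 = ∑ x ∈ ({1} : Finset ℕ), x := by simp
          _ ≤ ∑ x ∈ e.divisors, x := Finset.sum_le_sum_of_subset (by simpa using this)
      have hS : σ 1 P * (p - 1) + 1 = p * P := by
        rw [hP, sigma_one_apply, Nat.sum_divisors_prime_pow pp]
        have := geom_aux p (by omega) (a + 1)
        simpa [pow_succ, mul_comm] using this
      have h1 : 2 * d ≤ σ 1 P * σ 1 e := by rw [← hsig]; exact hdnd
      -- derive p < 2 * e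
      set S := σ 1 P with hSS
      set G := σ 1 e with hGG
      set q := p - 1 with hqq
      have hq1 : 1 ≤ q := by omega
      have hpq : p = q + 1 := by omega
      have c1 : 2 * d * q ≤ S * G * q := Nat.mul_le_mul_right q h1
      have c2 : S * G * q + G = p * P * G := by
        calc S * G * q + G = (S * q + 1) * G := by ring
          _ = p * P * G := by rw [hS]
      have c3 : p * P * G + p * P ≤ 2 * e * (p * P) := by
        calc p * P * G + p * P = (G + 1) * (p * P) := by ring
          _ ≤ (2 * e) * (p * P) := Nat.mul_le_mul_right _ (by omega)
      have c4 : 2 * d * q + G + p * P ≤ 2 * e * (p * P) := by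
        calc 2 * d * q + G + p * P ≤ S * G * q + G + p * P := by omega
          _ = p * P * G + p * P := by omega
          _ ≤ 2 * e * (p * P) := c3
      have c5 : 2 * e * (p * P) = 2 * d * q + 2 * P * e := by
        rw [← hPe, hpq]; ring
      have c6 : p * P < 2 * e * P := by
        have : G + p * P ≤ 2 * P * e := by omega
        calc p * P < G + p * P := by omega
          _ ≤ 2 * P * e := this
          _ = 2 * e * P := by ring
      have hple : p < 2 * e := Nat.lt_of_mul_lt_mul_right c6
      have hpP : p ≤ P := by
        calc p = p ^ 1 := (pow_one p).symm
          _ ≤ p ^ a := Nat.pow_le_pow_right (by omega) ha1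
      have : p ^ 2 < 2 * d := by
        calc p ^ 2 = p * p := sq p
          _ < 2 * e * p := mul_lt_mul_of_pos_right hple (by omega)
          _ ≤ 2 * e * P := Nat.mul_le_mul_left _ hpP
          _ = 2 * d := by rw [← hPe]; ring
      omega
end

section
/- For real numbers x ≥ 1, y ≥ 2 and s ∈ [0, 1), the sum of 1/n over positive integers n > x with P(n) ≤ y satisfies ∑ 1/n ≤ x^(−s) · ∏_{p ≤ y, p prime} (1 − p^(s−1))^(−1). -/
open scoped Classical

/-- Rankin's trick: for `x ≥ 1`, `y ≥ 2` and `s ∈ [0, 1)`, the sum of `1/n`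
over the `y`-smooth integers `n > x` is at most
`x^(−s) ∏_{p ≤ y} (1 − p^(s−1))⁻¹`. -/
theorem smooth_reciprocal_sum_rankin (x y s : ℝ) (hx : 1 ≤ x) (hy : 2 ≤ y)
    (hs0 : 0 ≤ s) (hs1 : s < 1) :
    Summable (fun n : ℕ =>
      if 0 < n ∧ x < (n : ℝ) ∧ (P n : ℝ) ≤ y then (1 : ℝ) / n else 0) ∧
    (∑' n : ℕ, if 0 < n ∧ x < (n : ℝ) ∧ (P n : ℝ) ≤ y then (1 : ℝ) / n else 0) ≤
      x ^ (-s) *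
        ∏ p ∈ (Finset.range (⌊y⌋₊ + 1)).filter Nat.Prime,
          (1 - (p : ℝ) ^ (s - 1))⁻¹ := by
  have hx0 : (0 : ℝ) < x := by linarith
  have hs1' : s - 1 < 0 := by linarith
  set N := ⌊y⌋₊ + 1 with hN
  let f : ℕ →* ℝ :=
    { toFun := fun n => (n : ℝ) ^ (s - 1)
      map_one' := by simp
      map_mul' := fun m n => by
        push_cast
        rw [Real.mul_rpow (Nat.cast_nonneg m) (Nat.cast_nonneg n)] }
  have hf : ∀ {p : ℕ}, p.Prime → ‖f p‖ < 1 := by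
    intro p hp
    have h1 : (1 : ℝ) < p := by exact_mod_cast hp.one_lt
    have h2 : (p : ℝ) ^ (s - 1) < 1 := Real.rpow_lt_one_of_one_lt_of_neg h1 hs1'
    have h3 : (0 : ℝ) ≤ (p : ℝ) ^ (s - 1) := Real.rpow_nonneg (by positivity) _
    show |(p : ℝ) ^ (s - 1)| < 1
    rw [abs_of_nonneg h3]
    exact h2
  obtain ⟨hsum, hHasSum⟩ :=
    EulerProduct.summable_and_hasSum_smoothNumbers_prod_primesBelow_geometric hf N
  have hInd : HasSum (Set.indicator N.smoothNumbers f)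
      (∏ p ∈ N.primesBelow, (1 - f p)⁻¹) :=
    (hasSum_subtype_iff_indicator).mp hHasSum
  have hInd' : HasSum (fun n => x ^ (-s) * Set.indicator N.smoothNumbers f n)
      (x ^ (-s) * ∏ p ∈ N.primesBelow, (1 - f p)⁻¹) := hInd.mul_left _
  have hnonneg : ∀ n : ℕ,
      0 ≤ (if 0 < n ∧ x < (n : ℝ) ∧ (P n : ℝ) ≤ y then (1 : ℝ) / n else 0) := by
    intro n; split <;> positivity
  have hle : ∀ n : ℕ,
      (if 0 < n ∧ x < (n : ℝ) ∧ (P n : ℝ) ≤ y then (1 : ℝ) / n else 0) ≤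
      x ^ (-s) * Set.indicator N.smoothNumbers f n := by
    intro n
    have hind_nonneg : 0 ≤ x ^ (-s) * Set.indicator N.smoothNumbers f n := by
      apply mul_nonneg (Real.rpow_nonneg hx0.le _)
      apply Set.indicator_nonneg
      intro a _
      exact Real.rpow_nonneg (Nat.cast_nonneg a) _
    split
    · rename_i h
      obtain ⟨hn0, hxn, hPy⟩ := h
      -- n is N-smooth
      have hmem : n ∈ N.smoothNumbers := by
        rw [Nat.mem_smoothNumbers']
        intro p hp hdvd
        have hpf : p ∈ n.primeFactors := Nat.mem_primeFactors.mpr ⟨hp, hdvd, hn0.ne'⟩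
        have h1 : p ≤ P n := le_trans (Finset.le_sup (f := _root_.id) hpf) (le_max_right _ _)
        have h1' : (p : ℝ) ≤ (P n : ℝ) := Nat.cast_le.mpr h1
        have h2 : p ≤ ⌊y⌋₊ := Nat.le_floor (h1'.trans hPy)
        omega
      rw [Set.indicator_of_mem hmem]
      have hn1 : (1 : ℝ) ≤ (n : ℝ) := by exact_mod_cast hn0
      have hnn : (0 : ℝ) < n := by linarith
      have h1 : x ^ s ≤ (n : ℝ) ^ s := Real.rpow_le_rpow hx0.le hxn.le hs0
      have h3 : (1 : ℝ) ≤ (n : ℝ) ^ s / x ^ s :=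
        (one_le_div (Real.rpow_pos_of_pos hx0 s)).mpr h1
      have h2 : x ^ (-s) * (f n : ℝ) = ((n : ℝ) ^ s / x ^ s) * (1 / n) := by
        show x ^ (-s) * (n : ℝ) ^ (s - 1) = _
        rw [Real.rpow_neg hx0.le, Real.rpow_sub hnn, Real.rpow_one]
        ring
      rw [h2]
      calc (1 : ℝ) / n = 1 * (1 / n) := by ring
        _ ≤ ((n : ℝ) ^ s / x ^ s) * (1 / n) :=
          mul_le_mul_of_nonneg_right h3 (by positivity)
    · exact hind_nonneg
  have hsummable : Summable (fun n : ℕ =>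
      if 0 < n ∧ x < (n : ℝ) ∧ (P n : ℝ) ≤ y then (1 : ℝ) / n else 0) :=
    Summable.of_nonneg_of_le hnonneg hle hInd'.summable
  refine ⟨hsummable, ?_⟩
  have hbound := Summable.tsum_le_tsum hle hsummable hInd'.summable
  rw [hInd'.tsum_eq] at hbound
  refine hbound.trans_eq ?_
  congr 1
end

section
/- Let ε = 2.3×10⁻⁸ and Li(x) = ∫₂ˣ dt/log t. Assume that the Chebyshev function ϑ(t) = ∑_{p ≤ t, p prime} log p satisfies ϑ(t) < (1+ε)·t for all t > 0. Then for every real y ≥ 2 and every s ∈ (0, 0.041], ∑_{p ≤ y, p prime} p^(s−1) ≤ (1+ε)·( Li(y^s) − Li(2^s) + 2^s/log 2 ). -/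
open MeasureTheory intervalIntegral Set

/-- The first Chebyshev function `ϑ(t) = ∑_{p ≤ t} log p`, the sum ranging over
primes `p ≤ t`. -/
noncomputable def theta (t : ℝ) : ℝ :=
  ∑ p ∈ (Finset.range (⌊t⌋₊ + 1)).filter Nat.Prime, Real.log p

/-- The logarithmic integral `Li(x) = ∫₂ˣ dt / log t`. -/
noncomputable def Li (x : ℝ) : ℝ := ∫ t in (2 : ℝ)..x, 1 / Real.log t

/-- Tail version of `intervalIntegral.integral_indicator`. -/
lemma my_integral_indicator_Ici {f : ℝ → ℝ} {a b c : ℝ} (hc : c ∈ Set.Icc a b)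
    (hf : IntervalIntegrable f volume a b) :
    ∫ x in a..b, Set.indicator (Set.Ici c) f x = ∫ x in c..b, f x := by
  have hind : IntervalIntegrable (Set.indicator (Set.Iic c) f) volume a b := by
    rw [intervalIntegrable_iff] at hf ⊢
    exact hf.indicator measurableSet_Iic
  have hac : IntervalIntegrable f volume a c :=
    hf.mono_set (by
      rw [Set.uIcc_of_le hc.1, Set.uIcc_of_le (hc.1.trans hc.2)]
      exact Set.Icc_subset_Icc le_rfl hc.2)
  have h1 : ∫ x in a..b, Set.indicator (Set.Iic c) f x = ∫ x in a..c, f x :=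
    intervalIntegral.integral_indicator hc
  have hae : ∀ᵐ x : ℝ, x ∈ Set.uIoc a b →
      Set.indicator (Set.Ici c) f x = f x - Set.indicator (Set.Iic c) f x := by
    have h0 : ({c} : Set ℝ)ᶜ ∈ MeasureTheory.ae (volume : Measure ℝ) :=
      MeasureTheory.compl_mem_ae_iff.mpr (measure_singleton c)
    filter_upwards [h0] with x hx _
    have hxc : x ≠ c := hx
    by_cases h : c ≤ x
    · have h2 : ¬ x ≤ c := fun h' => hxc (le_antisymm h' h)
      simp [Set.indicator_apply, h, h2]
    · have h2 : x ≤ c := le_of_not_ge h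
      simp [Set.indicator_apply, h, h2]
  calc ∫ x in a..b, Set.indicator (Set.Ici c) f x
      = ∫ x in a..b, (f x - Set.indicator (Set.Iic c) f x) :=
        intervalIntegral.integral_congr_ae hae
    _ = (∫ x in a..b, f x) - ∫ x in a..b, Set.indicator (Set.Iic c) f x :=
        intervalIntegral.integral_sub hf hind
    _ = (∫ x in a..b, f x) - ∫ x in a..c, f x := by rw [h1]
    _ = ∫ x in c..b, f x := intervalIntegral.integral_interval_sub_left hf hac

lemma my_hasDerivAt_F {s t : ℝ} (ht : 1 < t) :
    HasDerivAt (fun u : ℝ => u ^ (s - 1) / Real.log u)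
      ((s - 1) * t ^ (s - 2) / Real.log t - t ^ (s - 2) / (Real.log t) ^ 2) t := by
  have ht0 : (0:ℝ) < t := lt_trans one_pos ht
  have hlt : 0 < Real.log t := Real.log_pos ht
  have hL : Real.log t ≠ 0 := ne_of_gt hlt
  have h1 : HasDerivAt (fun u : ℝ => u ^ (s - 1)) ((s - 1) * t ^ (s - 2)) t := by
    have := Real.hasDerivAt_rpow_const (x := t) (p := s - 1) (Or.inl (ne_of_gt ht0))
    convert this using 2
    ring_nf
  have h2 : HasDerivAt Real.log t⁻¹ t := Real.hasDerivAt_log (ne_of_gt ht0)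
  have h3 := h1.div h2 hL
  refine h3.congr_deriv (Eq.symm ?_)
  have ht2 : t ^ (s - 1) * t⁻¹ = t ^ (s - 2) := by
    rw [← Real.rpow_neg_one t, ← Real.rpow_add ht0]
    ring_nf
  rw [ht2]
  field_simp

lemma my_hasDerivAt_G {s t : ℝ} (ht : 1 < t) :
    HasDerivAt (fun u : ℝ => u ^ s / Real.log u)
      (t ^ (s - 1) / Real.log t +
        t * ((s - 1) * t ^ (s - 2) / Real.log t - t ^ (s - 2) / (Real.log t) ^ 2)) t := by
  have ht0 : (0:ℝ) < t := lt_trans one_pos ht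
  have hlt : 0 < Real.log t := Real.log_pos ht
  have hL : Real.log t ≠ 0 := ne_of_gt hlt
  have h1 : HasDerivAt (fun u : ℝ => u ^ s) (s * t ^ (s - 1)) t :=
    Real.hasDerivAt_rpow_const (x := t) (p := s) (Or.inl (ne_of_gt ht0))
  have h2 : HasDerivAt Real.log t⁻¹ t := Real.hasDerivAt_log (ne_of_gt ht0)
  have h3 := h1.div h2 hL
  refine h3.congr_deriv (Eq.symm ?_)
  have ht1 : t ^ s * t⁻¹ = t ^ (s - 1) := by
    rw [← Real.rpow_neg_one t, ← Real.rpow_add ht0]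
    ring_nf
  have ht2 : t * t ^ (s - 2) = t ^ (s - 1) := by
    nth_rewrite 1 [← Real.rpow_one t]
    rw [← Real.rpow_add ht0]
    ring_nf
  rw [ht1, show t * ((s - 1) * t ^ (s - 2) / Real.log t - t ^ (s - 2) / (Real.log t) ^ 2)
      = (s - 1) * (t * t ^ (s - 2)) / Real.log t - (t * t ^ (s - 2)) / (Real.log t) ^ 2 from by
        ring, ht2]
  field_simp
  ring

lemma my_mem_one_lt {t : ℝ} (ht : 1 < t) : t ∈ {u : ℝ | 1 < u} := ht

lemma my_contRpow {c : ℝ} : ContinuousOn (fun t : ℝ => t ^ c) {t : ℝ | 1 < t} :=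
  ContinuousOn.rpow_const continuousOn_id
    (fun t ht => Or.inl (ne_of_gt (lt_trans one_pos ht)))

lemma my_contLog : ContinuousOn Real.log {t : ℝ | 1 < t} :=
  Real.continuousOn_log.mono (fun t ht => by
    simp only [Set.mem_compl_iff, Set.mem_singleton_iff]
    exact ne_of_gt (lt_trans one_pos ht))

lemma my_logne {t : ℝ} (ht : t ∈ {u : ℝ | 1 < u}) : Real.log t ≠ 0 :=
  ne_of_gt (Real.log_pos ht)

lemma my_contF' {s : ℝ} : ContinuousOn
    (fun t : ℝ => (s - 1) * t ^ (s - 2) / Real.log t - t ^ (s - 2) / (Real.log t) ^ 2)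
    {t : ℝ | 1 < t} := by
  apply ContinuousOn.sub
  · exact (continuousOn_const.mul my_contRpow).div my_contLog (fun t ht => my_logne ht)
  · exact my_contRpow.div (my_contLog.pow 2)
      (fun t ht => pow_ne_zero 2 (my_logne ht))

lemma my_contF {s : ℝ} : ContinuousOn
    (fun t : ℝ => t ^ (s - 1) / Real.log t) {t : ℝ | 1 < t} :=
  my_contRpow.div my_contLog (fun t ht => my_logne ht)

lemma my_contInv : ContinuousOn (fun u : ℝ => 1 / Real.log u) {u : ℝ | 1 < u} :=
  continuousOn_const.div my_contLog (fun t ht => my_logne ht)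

/-- With `ε = 2.3·10⁻⁸`: if `ϑ(t) < (1+ε) t` for all `t > 0`, then for `y ≥ 2`
and `s ∈ (0, 0.041]`,
`∑_{p ≤ y} p^(s−1) ≤ (1+ε)(Li(y^s) − Li(2^s) + 2^s/log 2)`. -/
theorem prime_power_sum_le_li (htheta : ∀ t : ℝ, 0 < t → theta t < (1 + 2.3e-8) * t)
    (y s : ℝ) (hy : 2 ≤ y) (hs0 : 0 < s) (hs : s ≤ 0.041) :
    ∑ p ∈ (Finset.range (⌊y⌋₊ + 1)).filter Nat.Prime, (p : ℝ) ^ (s - 1) ≤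
      (1 + 2.3e-8) * (Li (y ^ s) - Li (2 ^ s) + 2 ^ s / Real.log 2) := by
  classical
  have hs1 : s < 1 := lt_of_le_of_lt hs (by norm_num)
  have hy0 : (0:ℝ) < y := by linarith
  have hy1 : (1:ℝ) < y := by linarith
  have hε0 : (0:ℝ) < 1 + 2.3e-8 := by norm_num
  set F : ℝ → ℝ := fun t => t ^ (s - 1) / Real.log t with hFdef
  set F' : ℝ → ℝ := fun t =>
    (s - 1) * t ^ (s - 2) / Real.log t - t ^ (s - 2) / (Real.log t) ^ 2 with hF'def
  set S : Finset ℕ := (Finset.range (⌊y⌋₊ + 1)).filter Nat.Prime with hSdef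
  have hsub : Set.Icc (2:ℝ) y ⊆ {t : ℝ | 1 < t} :=
    fun t ht => lt_of_lt_of_le one_lt_two ht.1
  have huIcc : Set.uIcc (2:ℝ) y = Set.Icc 2 y := Set.uIcc_of_le hy
  have hIntF' : IntervalIntegrable F' volume 2 y := by
    apply ContinuousOn.intervalIntegrable
    rw [huIcc]
    exact my_contF'.mono hsub
  have hIntF : IntervalIntegrable F volume 2 y := by
    apply ContinuousOn.intervalIntegrable
    rw [huIcc]
    exact my_contF.mono hsub
  have hpS : ∀ p ∈ S, 2 ≤ (p:ℝ) ∧ (p:ℝ) ≤ y := by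
    intro p hp
    rw [hSdef, Finset.mem_filter, Finset.mem_range, Nat.lt_succ_iff] at hp
    refine ⟨by exact_mod_cast hp.2.two_le, ?_⟩
    calc (p:ℝ) ≤ (⌊y⌋₊ : ℝ) := by exact_mod_cast hp.1
      _ ≤ y := Nat.floor_le hy0.le
  -- Step 1: pointwise identity for each prime
  have hstep : ∀ p ∈ S, (p:ℝ) ^ (s - 1) =
      Real.log p * F y + ∫ t in (2:ℝ)..y,
        Set.indicator (Set.Ici (p:ℝ)) (fun u => Real.log p * (-F' u)) t := by
    intro p hp
    obtain ⟨hp2, hpy⟩ := hpS p hp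
    have hp1 : (1:ℝ) < p := by linarith
    have hlogp : (0:ℝ) < Real.log p := Real.log_pos hp1
    have hFTC : ∫ t in (p:ℝ)..y, F' t = F y - F p := by
      apply intervalIntegral.integral_eq_sub_of_hasDerivAt
      · intro t ht
        rw [Set.uIcc_of_le hpy] at ht
        exact my_hasDerivAt_F (lt_of_lt_of_le hp1 ht.1)
      · exact hIntF'.mono_set (by
          rw [huIcc, Set.uIcc_of_le hpy]
          exact Set.Icc_subset_Icc hp2 le_rfl)
    have hintc : IntervalIntegrable (fun u => Real.log p * (-F' u)) volume 2 y :=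
      (hIntF'.neg).const_mul _
    have hind : (∫ t in (2:ℝ)..y,
        Set.indicator (Set.Ici (p:ℝ)) (fun u => Real.log p * (-F' u)) t)
        = Real.log p * (F p - F y) := by
      rw [my_integral_indicator_Ici ⟨hp2, hpy⟩ hintc,
        intervalIntegral.integral_const_mul, intervalIntegral.integral_neg, hFTC]
      ring
    have hlp : Real.log p * F p = (p:ℝ) ^ (s - 1) := by
      rw [hFdef]
      field_simp
    rw [hind]
    rw [← hlp]
    ring
  -- Step 2: sum over primes
  have hintInd : ∀ p ∈ S, IntervalIntegrable
      (fun t => Set.indicator (Set.Ici (p:ℝ)) (fun u => Real.log p * (-F' u)) t)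
        volume 2 y := by
    intro p _
    have h0 : IntervalIntegrable (fun u => Real.log p * (-F' u)) volume 2 y :=
      (hIntF'.neg).const_mul _
    rw [intervalIntegrable_iff] at h0 ⊢
    exact h0.indicator measurableSet_Ici
  have hsum : ∑ p ∈ S, (p:ℝ) ^ (s - 1)
      = theta y * F y + ∫ t in (2:ℝ)..y,
          ∑ p ∈ S, Set.indicator (Set.Ici (p:ℝ)) (fun u => Real.log p * (-F' u)) t := by
    rw [Finset.sum_congr rfl hstep, Finset.sum_add_distrib, ← Finset.sum_mul,
      ← intervalIntegral.integral_finset_sum hintInd]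
    rfl
  -- Step 3: pointwise bound
  have hF'le : ∀ t ∈ Set.Icc (2:ℝ) y, F' t ≤ 0 := by
    intro t ht
    have ht1 : (1:ℝ) < t := hsub ht
    have ht0 : (0:ℝ) < t := lt_trans one_pos ht1
    have hlt : (0:ℝ) < Real.log t := Real.log_pos ht1
    have h1 : (0:ℝ) < t ^ (s-2) := Real.rpow_pos_of_pos ht0 _
    have h2 : (s - 1) * t ^ (s-2) / Real.log t ≤ 0 := by
      apply div_nonpos_of_nonpos_of_nonneg _ hlt.le
      nlinarith
    have h3 : (0:ℝ) ≤ t ^ (s-2) / (Real.log t) ^ 2 := by positivity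
    rw [hF'def]
    dsimp only
    linarith
  have hpoint : ∀ t ∈ Set.Icc (2:ℝ) y,
      (∑ p ∈ S, Set.indicator (Set.Ici (p:ℝ)) (fun u => Real.log p * (-F' u)) t)
        ≤ (1 + 2.3e-8) * t * (-F' t) := by
    intro t ht
    have ht1 : (1:ℝ) < t := hsub ht
    have ht0 : (0:ℝ) < t := lt_trans one_pos ht1
    have hkey : (∑ p ∈ S, Set.indicator (Set.Ici (p:ℝ)) (fun u => Real.log p * (-F' u)) t)
        = theta t * (-F' t) := by
      have h1 : ∀ p ∈ S, Set.indicator (Set.Ici (p:ℝ)) (fun u => Real.log p * (-F' u)) t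
          = if (p:ℝ) ≤ t then Real.log p * (-F' t) else 0 := by
        intro p _
        simp [Set.indicator_apply, Set.mem_Ici]
      rw [Finset.sum_congr rfl h1]
      have hset : S.filter (fun p : ℕ => (p:ℝ) ≤ t)
          = (Finset.range (⌊t⌋₊ + 1)).filter Nat.Prime := by
        ext q
        simp only [hSdef, Finset.mem_filter, Finset.mem_range, Nat.lt_succ_iff]
        constructor
        · rintro ⟨⟨_, hqp⟩, hqt⟩
          exact ⟨Nat.le_floor hqt, hqp⟩
        · rintro ⟨hq, hqp⟩
          have hqt : (q:ℝ) ≤ t :=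
            le_trans (by exact_mod_cast hq : (q:ℝ) ≤ (⌊t⌋₊:ℝ)) (Nat.floor_le ht0.le)
          have hqy : q ≤ ⌊y⌋₊ := le_trans hq (Nat.floor_mono ht.2)
          exact ⟨⟨hqy, hqp⟩, hqt⟩
      rw [← Finset.sum_filter, hset, theta, ← Finset.sum_mul]
    rw [hkey]
    have hθ : theta t ≤ (1 + 2.3e-8) * t := (htheta t ht0).le
    have hnn : 0 ≤ -F' t := by linarith [hF'le t ht]
    exact mul_le_mul_of_nonneg_right hθ hnn
  -- Step 4: integral comparison
  have hGint : IntervalIntegrable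
      (fun t => ∑ p ∈ S, Set.indicator (Set.Ici (p:ℝ)) (fun u => Real.log p * (-F' u)) t)
      volume 2 y := by
    rw [intervalIntegrable_iff]
    apply MeasureTheory.integrable_finset_sum
    intro p hp
    have := hintInd p hp
    rwa [intervalIntegrable_iff] at this
  have hHint : IntervalIntegrable (fun t => (1 + 2.3e-8) * t * (-F' t)) volume 2 y := by
    apply ContinuousOn.intervalIntegrable
    rw [huIcc]
    exact ((continuous_const.mul continuous_id).continuousOn.mul (my_contF'.mono hsub).neg)
  have hmono : (∫ t in (2:ℝ)..y,
        ∑ p ∈ S, Set.indicator (Set.Ici (p:ℝ)) (fun u => Real.log p * (-F' u)) t)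
      ≤ ∫ t in (2:ℝ)..y, (1 + 2.3e-8) * t * (-F' t) :=
    intervalIntegral.integral_mono_on hy hGint hHint hpoint
  -- Step 5: FTC for t^s / log t
  have hInttF' : IntervalIntegrable (fun t => t * F' t) volume 2 y := by
    apply ContinuousOn.intervalIntegrable
    rw [huIcc]
    exact continuous_id.continuousOn.mul (my_contF'.mono hsub)
  have hFTC2 : ∫ t in (2:ℝ)..y, (F t + t * F' t)
      = y ^ s / Real.log y - 2 ^ s / Real.log 2 := by
    rw [show (fun t => F t + t * F' t) = fun t => F t + t * F' t from rfl]
    have := intervalIntegral.integral_eq_sub_of_hasDerivAt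
      (f := fun u : ℝ => u ^ s / Real.log u) (f' := fun t => F t + t * F' t)
      (a := 2) (b := y) ?_ ?_
    · exact this
    · intro t ht
      rw [huIcc] at ht
      exact my_hasDerivAt_G (hsub ht)
    · exact hIntF.add hInttF'
  have hsplit : (∫ t in (2:ℝ)..y, (F t + t * F' t))
      = (∫ t in (2:ℝ)..y, F t) + ∫ t in (2:ℝ)..y, t * F' t :=
    intervalIntegral.integral_add hIntF hInttF'
  have hneg : ∫ t in (2:ℝ)..y, (1 + 2.3e-8) * t * (-F' t)
      = (1 + 2.3e-8) * ((∫ t in (2:ℝ)..y, F t)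
          - (y ^ s / Real.log y - 2 ^ s / Real.log 2)) := by
    have h0 : (fun t => (1 + 2.3e-8) * t * (-F' t))
        = fun t => (1 + 2.3e-8) * (-(t * F' t)) := by
      funext t; ring
    rw [h0, intervalIntegral.integral_const_mul, intervalIntegral.integral_neg]
    have h2 : (∫ t in (2:ℝ)..y, t * F' t)
        = (y ^ s / Real.log y - 2 ^ s / Real.log 2) - ∫ t in (2:ℝ)..y, F t := by
      rw [← hFTC2, hsplit]; ring
    rw [h2]; ring
  -- Step 6: change of variables, ∫ F = Li(y^s) - Li(2^s)
  have h2s1 : (1:ℝ) < 2 ^ s := by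
    rw [Real.one_lt_rpow_iff_of_pos two_pos]
    exact Or.inl ⟨one_lt_two, hs0⟩
  have hys2s : (2:ℝ) ^ s ≤ y ^ s := Real.rpow_le_rpow two_pos.le hy hs0.le
  have hLi : (∫ t in (2:ℝ)..y, F t) = Li (y ^ s) - Li (2 ^ s) := by
    have hcov : (∫ x in (2:ℝ)..y, (s * x ^ (s-1)) • (fun u => 1 / Real.log u) (x ^ s))
        = ∫ u in (2:ℝ)^s..y^s, 1 / Real.log u := by
      have h := intervalIntegral.integral_comp_smul_deriv'
        (f := fun x : ℝ => x ^ s) (f' := fun x => s * x ^ (s-1))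
        (g := fun u => 1 / Real.log u) (a := 2) (b := y)
        ?_ ?_ ?_
      · exact h
      · intro x hx
        rw [huIcc] at hx
        exact Real.hasDerivAt_rpow_const (Or.inl (ne_of_gt (lt_trans one_pos (hsub hx))))
      · rw [huIcc]
        exact (continuousOn_const.mul (my_contRpow.mono hsub))
      · apply my_contInv.mono
        rintro u ⟨x, hx, rfl⟩
        rw [huIcc] at hx
        have hx1 : (1:ℝ) < x := hsub hx
        exact (Real.one_lt_rpow_iff_of_pos (lt_trans one_pos hx1)).mpr (Or.inl ⟨hx1, hs0⟩)
    have hEq : ∀ x ∈ Set.uIcc (2:ℝ) y,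
        F x = (s * x ^ (s-1)) • (fun u => 1 / Real.log u) (x ^ s) := by
      intro x hx
      rw [huIcc] at hx
      have hx1 : (1:ℝ) < x := hsub hx
      have hx0 : (0:ℝ) < x := lt_trans one_pos hx1
      have hlx : Real.log x ≠ 0 := ne_of_gt (Real.log_pos hx1)
      simp only [smul_eq_mul, hFdef, Real.log_rpow hx0]
      field_simp
    have hcongr : (∫ t in (2:ℝ)..y, F t)
        = ∫ x in (2:ℝ)..y, (s * x ^ (s-1)) • (fun u => 1 / Real.log u) (x ^ s) :=
      intervalIntegral.integral_congr hEq
    have hint1 : IntervalIntegrable (fun u => 1 / Real.log u) volume 2 (y ^ s) := by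
      apply ContinuousOn.intervalIntegrable
      apply my_contInv.mono
      intro u hu
      have hmin : min (2:ℝ) (y ^ s) ≤ u := (Set.mem_uIcc.mp hu).elim
        (fun h => le_trans (min_le_left _ _) h.1)
        (fun h => le_trans (min_le_right _ _) h.1)
      have : (1:ℝ) < min 2 (y ^ s) := lt_min one_lt_two (lt_of_lt_of_le h2s1 hys2s)
      exact lt_of_lt_of_le this hmin
    have hint2 : IntervalIntegrable (fun u => 1 / Real.log u) volume 2 (2 ^ s) := by
      apply ContinuousOn.intervalIntegrable
      apply my_contInv.mono
      intro u hu
      have hmin : min (2:ℝ) (2 ^ s) ≤ u := (Set.mem_uIcc.mp hu).elim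
        (fun h => le_trans (min_le_left _ _) h.1)
        (fun h => le_trans (min_le_right _ _) h.1)
      have : (1:ℝ) < min 2 (2 ^ s) := lt_min one_lt_two h2s1
      exact lt_of_lt_of_le this hmin
    have hLiSub : Li (y ^ s) - Li (2 ^ s) = ∫ u in (2:ℝ)^s..y^s, 1 / Real.log u := by
      rw [Li, Li]
      exact intervalIntegral.integral_interval_sub_left hint1 hint2
    rw [hcongr, hcov, hLiSub]
  -- Step 7: assemble
  have hFy : 0 ≤ F y := by
    rw [hFdef]
    have : (0:ℝ) < Real.log y := Real.log_pos hy1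
    positivity
  have hθy : theta y * F y ≤ (1 + 2.3e-8) * y * F y := by
    have := (htheta y hy0).le
    exact mul_le_mul_of_nonneg_right this hFy
  have hyFy : y * F y = y ^ s / Real.log y := by
    rw [hFdef]
    dsimp only
    rw [show y * (y ^ (s-1) / Real.log y) = (y * y ^ (s-1)) / Real.log y from by ring]
    congr 1
    nth_rewrite 1 [← Real.rpow_one y]
    rw [← Real.rpow_add hy0]
    ring_nf
  calc ∑ p ∈ S, (p:ℝ) ^ (s - 1)
      = theta y * F y + ∫ t in (2:ℝ)..y,
          ∑ p ∈ S, Set.indicator (Set.Ici (p:ℝ)) (fun u => Real.log p * (-F' u)) t := hsum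
    _ ≤ (1 + 2.3e-8) * y * F y + ∫ t in (2:ℝ)..y, (1 + 2.3e-8) * t * (-F' t) := by
        exact add_le_add hθy hmono
    _ = (1 + 2.3e-8) * (Li (y ^ s) - Li (2 ^ s) + 2 ^ s / Real.log 2) := by
        rw [hneg, hLi]
        rw [show (1 + 2.3e-8) * y * F y = (1 + 2.3e-8) * (y * F y) from by ring, hyFy]
        ring
end
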